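/- arXiv:math/0412156 — 8 statements merged into one kernel-verified Lean document; each statement's English description precedes it below -/
import Mathlib

section
/- Every element of order 2 in Q = ℤ² ⋊ ℤ/4 is conjugate in Q to exactly one of e₁t², (e₁+e₂)t², or t²; i.e. up to conjugacy the subgroups of order two of Q are ⟨e₁t²⟩, ⟨e₁e₂t²⟩ and ⟨t²⟩, and these three are pairwise non-conjugate. -/
open SemidirectProduct

/-- The automorphism of `ℤ²` given by multiplication by `i`: `(a,b) ↦ (-b,a)`. -/
def J : (ℤ × ℤ) ≃+ (ℤ × ℤ) where
  toFun p := (-p.2, p.1)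
  invFun p := (p.2, -p.1)
  left_inv p := by simp
  right_inv p := by simp
  map_add' p q := by simp [Prod.ext_iff]; ring

abbrev Z2 := Multiplicative (ℤ × ℤ)

def Jm : MulAut Z2 := AddEquiv.toMultiplicative J

lemma Jm_pow_four : Jm ^ 4 = 1 := by
  refine MulEquiv.ext fun x => ?_
  show Jm (Jm (Jm (Jm x))) = x
  simp [Jm, J, AddEquiv.toMultiplicative, Prod.ext_iff]

lemma Jm_pow_mod (n : ℕ) : Jm ^ (n % 4) = Jm ^ n := by
  conv_rhs => rw [← Nat.div_add_mod n 4]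
  rw [pow_add, pow_mul, Jm_pow_four, one_pow, one_mul]

/-- The action of `ℤ/4` on `ℤ²` by powers of multiplication by `i`. -/
def phiQ : Multiplicative (ZMod 4) →* MulAut Z2 where
  toFun s := Jm ^ (Multiplicative.toAdd s).val
  map_one' := by
    show Jm ^ (0 : ZMod 4).val = 1
    simp
  map_mul' a b := by
    show Jm ^ ((Multiplicative.toAdd a + Multiplicative.toAdd b : ZMod 4)).val = _
    rw [ZMod.val_add, Jm_pow_mod, pow_add]

/-- `Q = ℤ² ⋊ ℤ/4`. -/
abbrev Q := Z2 ⋊[phiQ] Multiplicative (ZMod 4)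

/-- The generator `t` of the `ℤ/4`-factor of `Q`. -/
def tQ : Q := inr (Multiplicative.ofAdd (1 : ZMod 4))

/-- The inclusion `ℤ² → Q`. -/
def ιQ (x : ℤ × ℤ) : Q := inl (Multiplicative.ofAdd x)

lemma phi_two (z : Z2) : phiQ (Multiplicative.ofAdd 2) z = z⁻¹ := rfl

lemma conj_formula (c : Q) (x : Z2) :
    c * (⟨x, Multiplicative.ofAdd 2⟩ : Q) * c⁻¹
      = ⟨c.left * c.left * phiQ c.right x, Multiplicative.ofAdd 2⟩ := by
  ext : 1
  · show c.left * phiQ c.right x * phiQ (c.right * Multiplicative.ofAdd 2) (phiQ c.right⁻¹ c.left⁻¹) = _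
    rw [← MulAut.mul_apply, ← map_mul, mul_comm c.right, mul_assoc (Multiplicative.ofAdd 2),
      mul_inv_cancel, mul_one, phi_two, inv_inv]
    exact mul_right_comm _ _ _
  · show c.right * Multiplicative.ofAdd 2 * c.right⁻¹ = _
    rw [mul_comm c.right, mul_assoc (Multiplicative.ofAdd 2), mul_inv_cancel, mul_one]
lemma mk_eq (x : ℤ × ℤ) :
    (ιQ x * tQ ^ 2 : Q) = ⟨Multiplicative.ofAdd x, Multiplicative.ofAdd 2⟩ := by
  ext <;> simp [ιQ, tQ, sq, mul_left, mul_right, ← ofAdd_add] <;> decide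

lemma phiQ_apply (s : Multiplicative (ZMod 4)) (z : Z2) :
    phiQ s z = (Jm ^ (Multiplicative.toAdd s).val) z := rfl

lemma conj_iff (x x' : ℤ × ℤ) :
    IsConj (ιQ x * tQ ^ 2) (ιQ x' * tQ ^ 2) ↔
      ∃ (y : ℤ × ℤ) (n : ℕ), n < 4 ∧
        x' = y + y + Multiplicative.toAdd ((Jm ^ n) (Multiplicative.ofAdd x)) := by
  rw [mk_eq, mk_eq, isConj_iff]
  constructor
  · rintro ⟨c, h⟩
    rw [conj_formula] at h
    have hl := congrArg SemidirectProduct.left h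
    simp only at hl
    refine ⟨Multiplicative.toAdd c.left, (Multiplicative.toAdd c.right).val, ZMod.val_lt _, ?_⟩
    rw [← phiQ_apply]
    have h2 := congrArg Multiplicative.toAdd hl
    simp only [toAdd_mul, toAdd_ofAdd] at h2
    rw [← h2]
  · rintro ⟨y, n, hn, h⟩
    refine ⟨⟨Multiplicative.ofAdd y, Multiplicative.ofAdd (n : ZMod 4)⟩, ?_⟩
    rw [conj_formula]
    congr 1
    rw [phiQ_apply]
    simp only [toAdd_ofAdd, ZMod.val_natCast, Jm_pow_mod]
    rw [h, ofAdd_add, ofAdd_toAdd, ofAdd_add]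
lemma JmA0 (p : ℤ × ℤ) : Multiplicative.toAdd ((Jm ^ 0) (Multiplicative.ofAdd p)) = p := rfl
lemma JmA1 (p : ℤ × ℤ) : Multiplicative.toAdd ((Jm ^ 1) (Multiplicative.ofAdd p)) = (-p.2, p.1) := rfl
lemma JmA2 (p : ℤ × ℤ) : Multiplicative.toAdd ((Jm ^ 2) (Multiplicative.ofAdd p)) = (-p.1, -p.2) := rfl
lemma Jm_apply (z : Z2) : Multiplicative.toAdd (Jm z)
    = (-(Multiplicative.toAdd z).2, (Multiplicative.toAdd z).1) := rfl

lemma JmA3 (p : ℤ × ℤ) : Multiplicative.toAdd ((Jm ^ 3) (Multiplicative.ofAdd p)) = (p.2, -p.1) := by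
  rw [pow_succ', MulAut.mul_apply, Jm_apply, JmA2]; simp

lemma tsq_eq : (tQ ^ 2 : Q) = ιQ (0, 0) * tQ ^ 2 := by
  have : ιQ (0, 0) = 1 := by simp [ιQ]; rfl
  rw [this, one_mul]

lemma order_two (g : Q) (hg : orderOf g = 2) : ∃ x : ℤ × ℤ, g = ιQ x * tQ ^ 2 := by
  have h2 : g ^ 2 = 1 := by rw [← hg]; exact pow_orderOf_eq_one g
  have hne : g ≠ 1 := by intro h; rw [h] at hg; simp at hg
  rw [sq] at h2
  have hr : g.right * g.right = 1 := congrArg SemidirectProduct.right h2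
  have hcase : g.right = 1 ∨ g.right = Multiplicative.ofAdd 2 := by
    revert hr
    exact (by decide : ∀ s : Multiplicative (ZMod 4), s * s = 1 → s = 1 ∨ s = Multiplicative.ofAdd 2) g.right
  rcases hcase with h1 | h1
  · exfalso
    have hl : g.left * phiQ g.right g.left = 1 := congrArg SemidirectProduct.left h2
    rw [h1, map_one] at hl
    have : g.left = 1 := by
      have := congrArg Multiplicative.toAdd hl
      simp only [toAdd_mul, toAdd_one, MulAut.one_apply] at this
      have h0 : Multiplicative.toAdd g.left = 0 := by
        rw [Prod.ext_iff] at this ⊢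
        simp only [Prod.fst_add, Prod.snd_add, Prod.fst_zero, Prod.snd_zero] at this ⊢
        omega
      rw [← ofAdd_toAdd g.left, h0]; rfl
    exact hne (by ext <;> simp [this, h1])
  · exact ⟨Multiplicative.toAdd g.left, by rw [mk_eq]; ext <;> simp [h1]⟩

/-- Every element of order `2` in `Q = ℤ² ⋊ ℤ/4` is conjugate to exactly one of
`e₁t²`, `(e₁+e₂)t²`, `t²`; in particular these three elements are pairwise non-conjugate. -/
theorem stmt_4 :
    (∀ g : Q, orderOf g = 2 →
        (IsConj (ιQ (1, 0) * tQ ^ 2) g ∨ IsConj (ιQ ((1, 0) + (0, 1)) * tQ ^ 2) g ∨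
          IsConj (tQ ^ 2) g)) ∧
    ¬ IsConj (ιQ (1, 0) * tQ ^ 2) (ιQ ((1, 0) + (0, 1)) * tQ ^ 2) ∧
    ¬ IsConj (ιQ (1, 0) * tQ ^ 2) (tQ ^ 2) ∧
    ¬ IsConj (ιQ ((1, 0) + (0, 1)) * tQ ^ 2) (tQ ^ 2) := by
  refine ⟨?_, ?_, ?_, ?_⟩
  · intro g hg
    obtain ⟨⟨a, b⟩, rfl⟩ := order_two g hg
    rcases Int.even_or_odd a with ⟨k, hk⟩ | ⟨k, hk⟩ <;>
      rcases Int.even_or_odd b with ⟨l, hl⟩ | ⟨l, hl⟩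
    · refine Or.inr (Or.inr ?_)
      nth_rewrite 1 [tsq_eq]
      rw [conj_iff]
      exact ⟨(k, l), 0, by norm_num,
        by simp only [JmA0, Prod.ext_iff, Prod.fst_add, Prod.snd_add]; constructor <;> omega⟩
    · refine Or.inl ?_
      rw [conj_iff]
      exact ⟨(k, l), 1, by norm_num,
        by simp only [JmA1, Prod.ext_iff, Prod.fst_add, Prod.snd_add]; constructor <;> omega⟩
    · refine Or.inl ?_
      rw [conj_iff]
      exact ⟨(k, l), 0, by norm_num,
        by simp only [JmA0, Prod.ext_iff, Prod.fst_add, Prod.snd_add]; constructor <;> omega⟩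
    · refine Or.inr (Or.inl ?_)
      rw [conj_iff]
      exact ⟨(k, l), 0, by norm_num,
        by simp only [JmA0, Prod.ext_iff, Prod.fst_add, Prod.snd_add]; constructor <;> omega⟩
  · rw [conj_iff]
    rintro ⟨⟨c, d⟩, n, hn, h⟩
    interval_cases n <;>
      simp only [JmA0, JmA1, JmA2, JmA3, Prod.ext_iff, Prod.fst_add, Prod.snd_add] at h <;>
      omega
  · nth_rewrite 2 [tsq_eq]
    rw [conj_iff]
    rintro ⟨⟨c, d⟩, n, hn, h⟩
    interval_cases n <;>
      simp only [JmA0, JmA1, JmA2, JmA3, Prod.ext_iff, Prod.fst_add, Prod.snd_add] at h <;>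
      omega
  · nth_rewrite 2 [tsq_eq]
    rw [conj_iff]
    rintro ⟨⟨c, d⟩, n, hn, h⟩
    interval_cases n <;>
      simp only [JmA0, JmA1, JmA2, JmA3, Prod.ext_iff, Prod.fst_add, Prod.snd_add] at h <;>
      omega
end

section
/- Every element of order 4 in Q = ℤ² ⋊ ℤ/4 generates a subgroup conjugate to ⟨e₁t⟩ or ⟨t⟩; equivalently, up to conjugacy there are exactly two subgroups of order four in Q, namely ⟨e₁t⟩ and ⟨t⟩. -/
open SemidirectProduct

open Pointwise

lemma conj_smul_zpowers {G : Type*} [Group G] (q h : G) :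
    MulAut.conj q • Subgroup.zpowers h = Subgroup.zpowers (q * h * q⁻¹) := by
  rw [Subgroup.pointwise_smul_def]
  exact MonoidHom.map_zpowers _ _

lemma Jm_apply_s5 (p : ℤ × ℤ) :
    Jm (Multiplicative.ofAdd p) = Multiplicative.ofAdd (-p.2, p.1) := rfl

lemma phiQ_ofAdd_one : phiQ (Multiplicative.ofAdd (1 : ZMod 4)) = Jm := by
  have h : (1 : ZMod 4).val = 1 := rfl
  show Jm ^ (1 : ZMod 4).val = Jm
  rw [h, pow_one]

lemma conj_gen (y x : ℤ × ℤ) :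
    (ιQ y) * (ιQ x * tQ) * (ιQ y)⁻¹ = ιQ (x.1 + y.1 + y.2, x.2 + y.2 - y.1) * tQ := by
  ext : 1
  · simp only [ιQ, tQ, mul_left, mul_right, inv_left, inv_right, left_inl, right_inl,
      left_inr, right_inr, map_one, one_mul, mul_one, inv_one, MulAut.one_apply,
      phiQ_ofAdd_one, ← ofAdd_neg, Jm_apply_s5, ← ofAdd_add]
    congr 1
    ext <;> dsimp <;> ring
  · simp [ιQ, tQ, mul_right, inv_right]

lemma par_Jm_pow (n : ℕ) (x : Z2) :
    (((Multiplicative.toAdd ((Jm ^ n) x)).1 + (Multiplicative.toAdd ((Jm ^ n) x)).2 : ℤ) : ZMod 2)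
      = (((Multiplicative.toAdd x).1 + (Multiplicative.toAdd x).2 : ℤ) : ZMod 2) := by
  induction n with
  | zero => simp
  | succ n ih =>
    rw [pow_succ', MulAut.mul_apply]
    have hJ : Multiplicative.toAdd (Jm ((Jm ^ n) x)) =
        (-(Multiplicative.toAdd ((Jm ^ n) x)).2, (Multiplicative.toAdd ((Jm ^ n) x)).1) := rfl
    rw [hJ, ← ih, ZMod.intCast_eq_intCast_iff]
    simp only [Int.ModEq]
    omega

def parQ : Q →* Multiplicative (ZMod 2) where
  toFun g := Multiplicative.ofAdd
    (((Multiplicative.toAdd g.left).1 + (Multiplicative.toAdd g.left).2 : ℤ) : ZMod 2)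
  map_one' := by simp
  map_mul' g h := by
    rw [← ofAdd_add]
    congr 1
    have h1 : (g * h).left = g.left * (Jm ^ (Multiplicative.toAdd g.right).val) h.left := rfl
    have h2 : Multiplicative.toAdd (g.left * (Jm ^ (Multiplicative.toAdd g.right).val) h.left)
        = Multiplicative.toAdd g.left
          + Multiplicative.toAdd ((Jm ^ (Multiplicative.toAdd g.right).val) h.left) := rfl
    rw [h1, h2]
    simp only [Prod.fst_add, Prod.snd_add]
    have h3 := par_Jm_pow (Multiplicative.toAdd g.right).val h.left
    push_cast at h3 ⊢
    linear_combination h3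

lemma parQ_iota (x : ℤ × ℤ) : parQ (ιQ x) = Multiplicative.ofAdd ((x.1 + x.2 : ℤ) : ZMod 2) := rfl

lemma parQ_tQ : parQ tQ = 1 := by
  show Multiplicative.ofAdd (((0:ℤ) + (0:ℤ) : ℤ) : ZMod 2) = 1
  norm_num

lemma parQ_e1t : parQ (ιQ (1, 0) * tQ) = Multiplicative.ofAdd (1 : ZMod 2) := by
  rw [map_mul, parQ_iota, parQ_tQ, mul_one]
  norm_num

lemma iota_zero_t : ιQ (0, 0) * tQ = tQ := by
  show inl (Multiplicative.ofAdd ((0:ℤ), (0:ℤ))) * tQ = tQ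
  have : Multiplicative.ofAdd ((0:ℤ), (0:ℤ)) = (1 : Z2) := rfl
  rw [this, map_one, one_mul]

lemma conj_right_one (g : Q) (h1 : g.right = Multiplicative.ofAdd (1 : ZMod 4)) :
    ∃ q : Q, q * (ιQ (1, 0) * tQ) * q⁻¹ = g ∨ q * tQ * q⁻¹ = g := by
  have hg : g = ιQ (Multiplicative.toAdd g.left) * tQ := by
    conv_lhs => rw [← inl_left_mul_inr_right g]
    rw [h1]
    rfl
  set p := Multiplicative.toAdd g.left with hp
  rcases Int.even_or_odd (p.1 + p.2) with ⟨c, hc⟩ | ⟨c, hc⟩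
  · refine ⟨ιQ (p.1 - c, c), Or.inr ?_⟩
    rw [← iota_zero_t, conj_gen, hg]
    have : (((0:ℤ),(0:ℤ)).1 + (p.1 - c, c).1 + (p.1 - c, c).2,
        ((0:ℤ),(0:ℤ)).2 + (p.1 - c, c).2 - (p.1 - c, c).1) = p := by
      ext <;> dsimp <;> omega
    rw [this]
  · refine ⟨ιQ (p.1 - 1 - c, c), Or.inl ?_⟩
    rw [conj_gen, hg]
    have : (((1:ℤ),(0:ℤ)).1 + (p.1 - 1 - c, c).1 + (p.1 - 1 - c, c).2,
        ((1:ℤ),(0:ℤ)).2 + (p.1 - 1 - c, c).2 - (p.1 - 1 - c, c).1) = p := by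
      ext <;> dsimp <;> omega
    rw [this]

lemma not_order_four_of_right_zero (g : Q) (h : g.right = Multiplicative.ofAdd (0 : ZMod 4)) :
    orderOf g ≠ 4 := by
  intro hord
  obtain ⟨x, s⟩ := g
  have hs : s = Multiplicative.ofAdd 0 := h
  subst hs
  have h4 : (⟨x, Multiplicative.ofAdd 0⟩ : Q) ^ 4 = 1 := by
    have := pow_orderOf_eq_one (⟨x, Multiplicative.ofAdd 0⟩ : Q)
    rwa [hord] at this
  have hg : (⟨x, Multiplicative.ofAdd 0⟩ : Q) = inl x := rfl
  rw [hg, ← map_pow] at h4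
  have hx4 : x ^ 4 = 1 := inl_injective (by rw [h4, map_one])
  have hp : (4 : ℕ) • Multiplicative.toAdd x = 0 := by
    simpa [toAdd_pow] using congrArg Multiplicative.toAdd hx4
  have h1 : (4 : ℕ) • (Multiplicative.toAdd x).1 = 0 := by rw [← Prod.smul_fst, hp]; rfl
  have h2 : (4 : ℕ) • (Multiplicative.toAdd x).2 = 0 := by rw [← Prod.smul_snd, hp]; rfl
  simp only [nsmul_eq_mul, Nat.cast_ofNat] at h1 h2
  have hx : Multiplicative.toAdd x = 0 := by
    simp only [Prod.ext_iff, Prod.fst_zero, Prod.snd_zero]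
    exact ⟨by omega, by omega⟩
  have hx1 : x = 1 := by simpa using congrArg Multiplicative.ofAdd hx
  subst hx1
  rw [hg, map_one] at hord
  simp at hord

lemma not_order_four_of_right_two (g : Q) (h : g.right = Multiplicative.ofAdd (2 : ZMod 4)) :
    orderOf g ≠ 4 := by
  intro hord
  have hsq : g * g = 1 := by
    ext : 1
    · show (g * g).left = (1 : Q).left
      rw [mul_left, h]
      have h2 : ∀ x : Z2, phiQ (Multiplicative.ofAdd (2 : ZMod 4)) x = x⁻¹ := fun x => rfl
      rw [h2, mul_inv_cancel]
      rfl
    · show (g * g).right = (1 : Q).right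
      rw [mul_right, h]
      decide
  have hdvd : orderOf g ∣ 2 := orderOf_dvd_of_pow_eq_one (by rw [pow_two]; exact hsq)
  rw [hord] at hdvd
  omega

/-- Every element of order `4` in `Q = ℤ² ⋊ ℤ/4` generates a subgroup conjugate to
`⟨e₁t⟩` or `⟨t⟩`; moreover these two subgroups are not conjugate, so up to conjugacy
there are exactly two subgroups of order four. -/
theorem stmt_5 :
    (∀ g : Q, orderOf g = 4 →
      ∃ q : Q,
        Subgroup.zpowers g = MulAut.conj q • Subgroup.zpowers (ιQ (1, 0) * tQ) ∨
        Subgroup.zpowers g = MulAut.conj q • Subgroup.zpowers tQ) ∧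
    (∀ q : Q, MulAut.conj q • Subgroup.zpowers (ιQ (1, 0) * tQ) ≠ Subgroup.zpowers tQ) := by
  constructor
  · intro g hord
    have hcases : ∀ s : Multiplicative (ZMod 4), s = Multiplicative.ofAdd 0 ∨
        s = Multiplicative.ofAdd 1 ∨ s = Multiplicative.ofAdd 2 ∨ s = Multiplicative.ofAdd 3 := by
      decide
    rcases hcases g.right with h | h | h | h
    · exact absurd hord (not_order_four_of_right_zero g h)
    · obtain ⟨q, hq | hq⟩ := conj_right_one g h
      · exact ⟨q, Or.inl (by rw [conj_smul_zpowers, hq])⟩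
      · exact ⟨q, Or.inr (by rw [conj_smul_zpowers, hq])⟩
    · exact absurd hord (not_order_four_of_right_two g h)
    · have hinv : g⁻¹.right = Multiplicative.ofAdd (1 : ZMod 4) := by
        rw [inv_right, h]; decide
      obtain ⟨q, hq | hq⟩ := conj_right_one g⁻¹ hinv
      · exact ⟨q, Or.inl (by rw [conj_smul_zpowers, hq, Subgroup.zpowers_inv])⟩
      · exact ⟨q, Or.inr (by rw [conj_smul_zpowers, hq, Subgroup.zpowers_inv])⟩
  · intro q hEq
    rw [conj_smul_zpowers] at hEq
    have hmem : q * (ιQ (1, 0) * tQ) * q⁻¹ ∈ Subgroup.zpowers tQ := by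
      rw [← hEq]; exact Subgroup.mem_zpowers _
    obtain ⟨k, hk⟩ := Subgroup.mem_zpowers_iff.mp hmem
    have hpar := congrArg parQ hk
    rw [map_zpow, map_mul, map_mul, map_inv, parQ_tQ, parQ_e1t, one_zpow] at hpar
    have h2 : Multiplicative.ofAdd (1 : ZMod 2) = 1 := by
      calc Multiplicative.ofAdd (1 : ZMod 2)
          = (parQ q)⁻¹ * (parQ q * Multiplicative.ofAdd (1 : ZMod 2) * (parQ q)⁻¹) * parQ q := by
            group
        _ = (parQ q)⁻¹ * 1 * parQ q := by rw [← hpar]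
        _ = 1 := by group
    exact absurd h2 (by decide)
end

section
/- The maximal finite subgroups of Q = ℤ² ⋊ ℤ/4 are, up to conjugacy, exactly M₀ = ⟨t⟩ ≅ ℤ/4, M₁ = ⟨e₁t⟩ ≅ ℤ/4, and M₂ = ⟨e₁t²⟩ ≅ ℤ/2. -/
open SemidirectProduct

open Pointwise

/-- A subgroup is maximal finite if it is finite and not properly contained in a finite
subgroup. -/
def IsMaximalFinite {Γ : Type*} [Group Γ] (M : Subgroup Γ) : Prop :=
  Finite M ∧ ∀ K : Subgroup Γ, Finite K → M ≤ K → M = K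

-- basic API
def el (x : ℤ × ℤ) (s : ZMod 4) : Q := ⟨Multiplicative.ofAdd x, Multiplicative.ofAdd s⟩

lemma el_eq_el {x y : ℤ × ℤ} {s r : ZMod 4} : el x s = el y r ↔ x = y ∧ s = r := by
  constructor
  · intro h
    have h1 := congrArg SemidirectProduct.left h
    have h2 := congrArg SemidirectProduct.right h
    exact ⟨Multiplicative.ofAdd.injective h1, Multiplicative.ofAdd.injective h2⟩
  · rintro ⟨rfl, rfl⟩; rfl

lemma one_eq_el : (1 : Q) = el 0 0 := rfl

lemma q_eq_el (q : Q) : q = el (Multiplicative.toAdd q.left) (Multiplicative.toAdd q.right) := rfl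

lemma Jm_ofAdd (y : ℤ × ℤ) : Jm (Multiplicative.ofAdd y) = Multiplicative.ofAdd (J y) := rfl

lemma Jm_pow_ofAdd (n : ℕ) (y : ℤ × ℤ) :
    (Jm ^ n) (Multiplicative.ofAdd y) = Multiplicative.ofAdd (J^[n] y) := by
  induction n generalizing y with
  | zero => rfl
  | succ n ih =>
    rw [pow_succ']
    show Jm ((Jm ^ n) (Multiplicative.ofAdd y)) = _
    rw [ih, Jm_ofAdd, Function.iterate_succ_apply']

lemma el_mul (x y : ℤ × ℤ) (s r : ZMod 4) :
    el x s * el y r = el (x + J^[s.val] y) (s + r) := by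
  show (⟨_ * phiQ _ _, _⟩ : Q) = _
  rw [el, SemidirectProduct.ext_iff]
  constructor
  · show Multiplicative.ofAdd x * (Jm ^ s.val) (Multiplicative.ofAdd y) = _
    rw [Jm_pow_ofAdd]; rfl
  · rfl

@[simp] lemma J_apply (y : ℤ × ℤ) : J y = (-y.2, y.1) := rfl
@[simp] lemma J_it0 (y : ℤ × ℤ) : J^[0] y = y := rfl
@[simp] lemma J_it1 (y : ℤ × ℤ) : J^[1] y = (-y.2, y.1) := rfl
@[simp] lemma J_it2 (y : ℤ × ℤ) : J^[2] y = (-y.1, -y.2) := by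
  rw [Function.iterate_succ_apply', J_it1, J_apply]
@[simp] lemma J_it3 (y : ℤ × ℤ) : J^[3] y = (y.2, -y.1) := by
  rw [Function.iterate_succ_apply', J_it2, J_apply]; simp
@[simp] lemma v0 : (0 : ZMod 4).val = 0 := rfl
@[simp] lemma v1 : (1 : ZMod 4).val = 1 := rfl
@[simp] lemma v2 : (2 : ZMod 4).val = 2 := rfl
@[simp] lemma v3 : (3 : ZMod 4).val = 3 := rfl
@[simp] lemma vm0 : (-0 : ZMod 4).val = 0 := rfl
@[simp] lemma vm1 : (-1 : ZMod 4).val = 3 := rfl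
@[simp] lemma vm2 : (-2 : ZMod 4).val = 2 := rfl
@[simp] lemma vm3 : (-3 : ZMod 4).val = 1 := rfl
@[simp] lemma v12 : ((1 : ZMod 4) + 2).val = 3 := rfl

lemma zmod4_cases (s : ZMod 4) : s = 0 ∨ s = 1 ∨ s = 2 ∨ s = 3 := by revert s; decide

lemma el_inv (x : ℤ × ℤ) (s : ZMod 4) : (el x s)⁻¹ = el (-(J^[(-s).val] x)) (-s) := by
  refine inv_eq_of_mul_eq_one_right ?_
  rw [el_mul, one_eq_el, el_eq_el]
  rcases zmod4_cases s with rfl | rfl | rfl | rfl <;>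
    simp [Prod.ext_iff]

lemma tQ_eq : tQ = el 0 1 := rfl
lemma g1_eq : ιQ (1, 0) * tQ = el (1, 0) 1 := by
  show el (1,0) 0 * el 0 1 = _
  rw [el_mul]; simp
lemma g2_eq : ιQ (1, 0) * tQ ^ 2 = el (1, 0) 2 := by
  show el (1,0) 0 * (el 0 1)^2 = _
  rw [sq, el_mul, el_mul]
  rw [el_eq_el]
  constructor
  · simp
  · decide

lemma el_sq (x : ℤ × ℤ) (s : ZMod 4) : (el x s)^2 = el (x + J^[s.val] x) (s + s) := by
  rw [sq, el_mul]

lemma el_sq_1 (x : ℤ × ℤ) : (el x 1)^2 = el (x.1 - x.2, x.1 + x.2) 2 := by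
  rw [el_sq, el_eq_el]
  refine ⟨?_, by decide⟩
  simp [Prod.ext_iff]; constructor <;> ring

lemma el_sq_3 (x : ℤ × ℤ) : (el x 3)^2 = el (x.1 + x.2, x.2 - x.1) 2 := by
  rw [el_sq, el_eq_el]
  refine ⟨?_, by decide⟩
  simp [Prod.ext_iff]; constructor <;> ring

lemma el_sq_2 (x : ℤ × ℤ) : (el x 2)^2 = 1 := by
  rw [el_sq, one_eq_el, el_eq_el]
  refine ⟨?_, by decide⟩
  simp [Prod.ext_iff]

lemma orderOf_el_1 (x : ℤ × ℤ) : orderOf (el x 1) = 4 := by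
  have h := orderOf_eq_prime_pow (x := el x 1) (p := 2) (n := 1) ?_ ?_
  · simpa using h
  · rw [pow_one, el_sq_1]
    simp only [ne_eq, one_eq_el, el_eq_el]
    rintro ⟨-, h⟩
    exact absurd h (by decide)
  · rw [show (2:ℕ) ^ (1+1) = 2*2 from rfl, pow_mul, el_sq_1, el_sq_2]

lemma orderOf_el_3 (x : ℤ × ℤ) : orderOf (el x 3) = 4 := by
  have h := orderOf_eq_prime_pow (x := el x 3) (p := 2) (n := 1) ?_ ?_
  · simpa using h
  · rw [pow_one, el_sq_3]
    simp only [ne_eq, one_eq_el, el_eq_el]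
    rintro ⟨-, h⟩
    exact absurd h (by decide)
  · rw [show (2:ℕ) ^ (1+1) = 2*2 from rfl, pow_mul, el_sq_3, el_sq_2]

lemma orderOf_el_2 (x : ℤ × ℤ) : orderOf (el x 2) = 2 := by
  refine orderOf_eq_prime (el_sq_2 x) ?_
  simp only [ne_eq, one_eq_el, el_eq_el]
  rintro ⟨-, h⟩
  exact absurd h (by decide)

lemma el_pow_0 (x : ℤ × ℤ) (n : ℕ) : (el x 0)^n = el (n • x) 0 := by
  induction n with
  | zero => simp [one_eq_el]
  | succ n ih =>
    rw [pow_succ, ih, el_mul, el_eq_el]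
    refine ⟨?_, by decide⟩
    simp [add_smul]

@[simp] lemma el_left (x : ℤ × ℤ) (s : ZMod 4) : Multiplicative.toAdd (el x s).left = x := rfl
@[simp] lemma el_right (x : ℤ × ℤ) (s : ZMod 4) : Multiplicative.toAdd (el x s).right = s := rfl

def sg (y : ℤ × ℤ) : ZMod 2 := ((y.1 + y.2 : ℤ) : ZMod 2)

lemma sg_add (u v : ℤ × ℤ) : sg (u + v) = sg u + sg v := by
  simp [sg]; push_cast; ring

lemma sg_J (n : ℕ) (y : ℤ × ℤ) : sg (J^[n] y) = sg y := by
  induction n with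
  | zero => rfl
  | succ n ih =>
    rw [Function.iterate_succ_apply', J_apply]
    rw [show sg (-(J^[n] y).2, (J^[n] y).1) = sg (J^[n] y) from ?_, ih]
    unfold sg
    rw [ZMod.intCast_eq_intCast_iff]
    unfold Int.ModEq
    omega

def sgm : Q →* Multiplicative (ZMod 2) where
  toFun g := Multiplicative.ofAdd (sg (Multiplicative.toAdd g.left))
  map_one' := by
    show Multiplicative.ofAdd (sg 0) = 1
    simp [sg]
  map_mul' a b := by
    rw [q_eq_el a, q_eq_el b, el_mul]
    show Multiplicative.ofAdd (sg _) = Multiplicative.ofAdd (sg _) * Multiplicative.ofAdd (sg _)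
    simp only [el_left]
    rw [← ofAdd_add, sg_add, sg_J]

lemma sgm_el (x : ℤ × ℤ) (s : ZMod 4) : sgm (el x s) = Multiplicative.ofAdd (sg x) := rfl

lemma sgm_conj (q g : Q) : sgm (MulAut.conj q g) = sgm g := by
  rw [MulAut.conj_apply, map_mul, map_mul, map_inv, mul_comm (sgm q) (sgm g), mul_assoc,
    mul_inv_cancel, mul_one]

lemma finite_zp {g : Q} (h : orderOf g ≠ 0) : Finite (Subgroup.zpowers g) := by
  have hf : IsOfFinOrder g := by
    by_contra h'
    exact h (orderOf_eq_zero_iff.mpr h')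
  exact hf.finite_zpowers.to_subtype

lemma stepA {K : Subgroup Q} (hK : Finite K) {x : ℤ × ℤ} (h : el x 0 ∈ K) : x = 0 := by
  have h1 : orderOf (⟨el x 0, h⟩ : K) ≠ 0 := (orderOf_pos _).ne'
  have h2 : orderOf (el x 0) ≠ 0 := by
    rwa [← orderOf_injective K.subtype K.subtype_injective ⟨el x 0, h⟩] at h1
  have h3 := pow_orderOf_eq_one (el x 0)
  rw [el_pow_0, one_eq_el, el_eq_el] at h3
  have := h3.1
  rcases smul_eq_zero.mp this with h4 | h4
  · exact absurd (Nat.cast_eq_zero.mp h4) h2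
  · exact h4

lemma stepA' {K : Subgroup Q} (hK : Finite K) {g : Q} (hg : g ∈ K)
    (hr : Multiplicative.toAdd g.right = 0) : g = 1 := by
  have hge : g = el (Multiplicative.toAdd g.left) 0 := by
    nth_rewrite 1 [q_eq_el g]
    rw [hr]
  rw [hge, one_eq_el, el_eq_el]
  exact ⟨stepA hK (hge ▸ hg), rfl⟩

lemma stepB {K : Subgroup Q} (hK : Finite K) {g : Q} (hg : g ∈ K)
    (hr : Multiplicative.toAdd g.right = 1 ∨ Multiplicative.toAdd g.right = 3) :
    K = Subgroup.zpowers g := by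
  apply le_antisymm
  · intro h hh
    obtain ⟨m, hm⟩ : ∃ m : ℕ, m • (Multiplicative.toAdd g.right) = Multiplicative.toAdd h.right := by
      rcases hr with h1 | h1
      · refine ⟨(Multiplicative.toAdd h.right).val, ?_⟩
        rw [h1, nsmul_eq_mul, mul_one, ZMod.natCast_val, ZMod.cast_id]
      · refine ⟨(3 * Multiplicative.toAdd h.right).val, ?_⟩
        rw [h1, nsmul_eq_mul, ZMod.natCast_val, ZMod.cast_id]
        have h4 : (4 : ZMod 4) = 0 := by decide
        linear_combination (2 * Multiplicative.toAdd h.right) * h4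
    have hmem : h * (g ^ m)⁻¹ ∈ K := K.mul_mem hh (K.inv_mem (K.pow_mem hg m))
    have hr0 : Multiplicative.toAdd (h * (g ^ m)⁻¹).right = 0 := by
      have hp : (g ^ m).right = g.right ^ m := by
        have := map_pow (SemidirectProduct.rightHom (φ := phiQ)) g m
        rwa [SemidirectProduct.rightHom_eq_right] at this
      rw [SemidirectProduct.mul_right, SemidirectProduct.inv_right, toAdd_mul, toAdd_inv, hp,
        toAdd_pow, hm]
      ring
    have := stepA' hK hmem hr0
    have heq : h = g ^ m := by
      rwa [mul_inv_eq_one] at this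
    exact heq ▸ Subgroup.npow_mem_zpowers g m
  · rw [Subgroup.zpowers_le]
    exact hg

lemma conj_el (z y : ℤ × ℤ) (s r : ZMod 4) :
    MulAut.conj (el z s) (el y r) =
      el (z + J^[s.val] y + J^[(s + r).val] (-(J^[(-s).val] z))) r := by
  rw [MulAut.conj_apply, el_inv, el_mul, el_mul, el_eq_el]
  exact ⟨rfl, by ring⟩

lemma smul_zpowers (a : MulAut Q) (g : Q) :
    a • Subgroup.zpowers g = Subgroup.zpowers (a g) := by
  rw [Subgroup.pointwise_smul_def]
  exact MonoidHom.map_zpowers _ _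

lemma isMaximalFinite_smul (a : MulAut Q) (H : Subgroup Q) (h : IsMaximalFinite H) :
    IsMaximalFinite (a • H) := by
  obtain ⟨hfin, hmax⟩ := h
  constructor
  · exact Finite.of_equiv H (Subgroup.equivSMul a H).toEquiv
  · intro K hK hle
    have h1 : H ≤ a⁻¹ • K := by
      rwa [← Subgroup.pointwise_smul_le_pointwise_smul_iff (a := a), smul_inv_smul]
    have h2 : Finite (a⁻¹ • K : Subgroup Q) := Finite.of_equiv K (Subgroup.equivSMul a⁻¹ K).toEquiv
    have h3 := hmax _ h2 h1
    rw [h3, smul_inv_smul]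

lemma max_tQ : IsMaximalFinite (Subgroup.zpowers tQ) := by
  constructor
  · exact finite_zp (by rw [tQ_eq, orderOf_el_1]; norm_num)
  · intro K hK hle
    exact (stepB hK (hle (Subgroup.mem_zpowers tQ)) (Or.inl rfl)).symm

lemma max_g1 : IsMaximalFinite (Subgroup.zpowers (ιQ (1, 0) * tQ)) := by
  constructor
  · exact finite_zp (by rw [g1_eq, orderOf_el_1]; norm_num)
  · intro K hK hle
    refine (stepB hK (hle (Subgroup.mem_zpowers _)) (Or.inl ?_)).symm
    rw [g1_eq]; rfl

lemma max_g2 : IsMaximalFinite (Subgroup.zpowers (ιQ (1, 0) * tQ ^ 2)) := by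
  rw [g2_eq]
  constructor
  · exact finite_zp (by rw [orderOf_el_2]; norm_num)
  · intro K hK hle
    refine le_antisymm hle ?_
    intro h hh
    have hg2 : el (1, 0) 2 ∈ K := hle (Subgroup.mem_zpowers _)
    rcases zmod4_cases (Multiplicative.toAdd h.right) with h0 | h0 | h0 | h0
    · rw [stepA' hK hh h0]; exact Subgroup.one_mem _
    · -- order 4 element: h^2 * (el (1,0) 2)⁻¹ ∈ K with right 0, gives parity contradiction
      exfalso
      set y := Multiplicative.toAdd h.left with hy
      have hhe : h = el y 1 := by nth_rewrite 1 [q_eq_el h]; rw [h0]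
      have hsq : h ^ 2 = el (y.1 - y.2, y.1 + y.2) 2 := by rw [hhe, el_sq_1]
      have hmem : h ^ 2 * (el (1, 0) 2)⁻¹ ∈ K :=
        K.mul_mem (K.pow_mem hh 2) (K.inv_mem hg2)
      rw [hsq, el_inv] at hmem
      rw [show (-(J^[(-2 : ZMod 4).val] ((1:ℤ), (0:ℤ)))) = (1, 0) by simp, el_mul] at hmem
      have := stepA hK (by convert hmem using 2; decide)
      rw [Prod.ext_iff] at this
      simp at this
      omega
    · -- h = el y 2, h * g2⁻¹ ∈ K right 0 ⇒ h = g2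
      set y := Multiplicative.toAdd h.left with hy
      have hhe : h = el y 2 := by nth_rewrite 1 [q_eq_el h]; rw [h0]
      have hmem : h * (el (1, 0) 2)⁻¹ ∈ K := K.mul_mem hh (K.inv_mem hg2)
      rw [hhe, el_inv] at hmem
      rw [show (-(J^[(-2 : ZMod 4).val] ((1:ℤ), (0:ℤ)))) = (1, 0) by simp, el_mul] at hmem
      have := stepA hK (by convert hmem using 2; decide)
      have hyv : y = (1, 0) := by
        rw [Prod.ext_iff] at this ⊢
        simp at this
        obtain ⟨ha, hb⟩ := this
        exact ⟨by omega, by omega⟩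
      rw [hhe, hyv]
      exact Subgroup.mem_zpowers _
    · -- like case 1 with el_sq_3
      exfalso
      set y := Multiplicative.toAdd h.left with hy
      have hhe : h = el y 3 := by nth_rewrite 1 [q_eq_el h]; rw [h0]
      have hsq : h ^ 2 = el (y.1 + y.2, y.2 - y.1) 2 := by rw [hhe, el_sq_3]
      have hmem : h ^ 2 * (el (1, 0) 2)⁻¹ ∈ K :=
        K.mul_mem (K.pow_mem hh 2) (K.inv_mem hg2)
      rw [hsq, el_inv] at hmem
      rw [show (-(J^[(-2 : ZMod 4).val] ((1:ℤ), (0:ℤ)))) = (1, 0) by simp, el_mul] at hmem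
      have := stepA hK (by convert hmem using 2; decide)
      rw [Prod.ext_iff] at this
      simp at this
      omega

lemma forward {H : Subgroup Q} (h : IsMaximalFinite H) :
    ∃ q : Q,
      H = MulAut.conj q • Subgroup.zpowers tQ ∨
      H = MulAut.conj q • Subgroup.zpowers (ιQ (1, 0) * tQ) ∨
      H = MulAut.conj q • Subgroup.zpowers (ιQ (1, 0) * tQ ^ 2) := by
  obtain ⟨hfin, hmax⟩ := h
  by_cases hodd : ∃ g ∈ H, Multiplicative.toAdd g.right = 1 ∨ Multiplicative.toAdd g.right = 3
  · obtain ⟨g, hg, hr⟩ := hodd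
    obtain ⟨g, hg, hr⟩ : ∃ g ∈ H, Multiplicative.toAdd g.right = 1 := by
      rcases hr with h1 | h1
      · exact ⟨g, hg, h1⟩
      · refine ⟨g⁻¹, H.inv_mem hg, ?_⟩
        rw [SemidirectProduct.inv_right, toAdd_inv, h1]
        decide
    have hH : H = Subgroup.zpowers g := stepB hfin hg (Or.inl hr)
    set y := Multiplicative.toAdd g.left with hy
    have hgel : g = el y 1 := by nth_rewrite 1 [q_eq_el g]; rw [hr]
    rcases Int.even_or_odd (y.1 + y.2) with ⟨b, hb⟩ | ⟨b, hb⟩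
    · refine ⟨el (y.1 - b, b) 0, Or.inl ?_⟩
      rw [smul_zpowers, tQ_eq, conj_el, hH, hgel]
      congr 2
      simp [Prod.ext_iff]
      omega
    · refine ⟨el (y.1 - 1 - b, b) 0, Or.inr (Or.inl ?_)⟩
      rw [smul_zpowers, g1_eq, conj_el, hH, hgel]
      congr 2
      simp [Prod.ext_iff]
      omega
  · push_neg at hodd
    by_cases h2 : ∃ g ∈ H, Multiplicative.toAdd g.right = 2
    · obtain ⟨g, hg, hr⟩ := h2
      set x := Multiplicative.toAdd g.left with hx
      have hgel : g = el x 2 := by nth_rewrite 1 [q_eq_el g]; rw [hr]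
      have hHle : H ≤ Subgroup.zpowers g := by
        intro h hh
        rcases zmod4_cases (Multiplicative.toAdd h.right) with h0 | h0 | h0 | h0
        · rw [stepA' hfin hh h0]; exact Subgroup.one_mem _
        · exact absurd h0 (hodd h hh).1
        · -- h * g⁻¹ has right 0 ⇒ h = g
          have hmem : h * g⁻¹ ∈ H := H.mul_mem hh (H.inv_mem hg)
          have hr0 : Multiplicative.toAdd (h * g⁻¹).right = 0 := by
            rw [SemidirectProduct.mul_right, SemidirectProduct.inv_right, toAdd_mul, toAdd_inv,
              h0, hr]
            ring
          have := stepA' hfin hmem hr0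
          rw [mul_inv_eq_one] at this
          rw [this]
          exact Subgroup.mem_zpowers _
        · exact absurd h0 (hodd h hh).2
      have hH : H = Subgroup.zpowers g :=
        hmax _ (finite_zp (by rw [hgel, orderOf_el_2]; norm_num)) hHle
      rcases Int.even_or_odd (x.1 + x.2) with ⟨b, hb⟩ | ⟨b, hb⟩
      · -- even sum: contradiction with maximality via square root
        exfalso
        set h4 := el (b, b - x.1) 1 with hh4
        have hsq : h4 ^ 2 = g := by
          rw [hh4, el_sq_1, hgel, el_eq_el]
          refine ⟨?_, rfl⟩
          simp [Prod.ext_iff]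
          omega
        have hle4 : H ≤ Subgroup.zpowers h4 := by
          rw [hH, Subgroup.zpowers_le]
          exact hsq ▸ (Subgroup.zpowers h4).pow_mem (Subgroup.mem_zpowers h4) 2
        have hfin4 : Finite (Subgroup.zpowers h4) :=
          finite_zp (by rw [hh4, orderOf_el_1]; norm_num)
        have hH4 := hmax _ hfin4 hle4
        have : h4 ∈ H := hH4 ▸ Subgroup.mem_zpowers h4
        exact (hodd h4 this).1 rfl
      · -- odd sum
        rcases Int.even_or_odd x.1 with ⟨c, hc⟩ | ⟨c, hc⟩
        · -- x.1 even, x.2 odd: conjugate by el (c, b - c) 1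
          refine ⟨el (c, b - c) 1, Or.inr (Or.inr ?_)⟩
          rw [smul_zpowers, g2_eq, conj_el, hH, hgel]
          congr 2
          simp [Prod.ext_iff]
          omega
        · refine ⟨el (c, (x.2) / 2) 0, Or.inr (Or.inr ?_)⟩
          rw [smul_zpowers, g2_eq, conj_el, hH, hgel]
          congr 2
          simp [Prod.ext_iff]
          omega
    · -- all elements trivial; H = ⊥ , contradiction with maximality vs zpowers tQ
      exfalso
      push_neg at h2
      have hle : H ≤ Subgroup.zpowers tQ := by
        intro h hh
        rcases zmod4_cases (Multiplicative.toAdd h.right) with h0 | h0 | h0 | h0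
        · rw [stepA' hfin hh h0]; exact Subgroup.one_mem _
        · exact absurd h0 (hodd h hh).1
        · exact absurd h0 (h2 h hh)
        · exact absurd h0 (hodd h hh).2
      have hH := hmax _ (finite_zp (by rw [tQ_eq, orderOf_el_1]; norm_num)) hle
      have : tQ ∈ H := hH ▸ Subgroup.mem_zpowers tQ
      exact (hodd tQ this).1 rfl

lemma sq_ne_one_of_zpowers_g2 {w : Q} (hw : w ∈ Subgroup.zpowers (ιQ (1, 0) * tQ ^ 2))
    (hsq : w * w ≠ 1) : False := by
  obtain ⟨k, hk⟩ := Subgroup.mem_zpowers_iff.mp hw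
  apply hsq
  have hn : (ιQ (1, 0) * tQ ^ 2) ^ (2 : ℕ) = 1 := by rw [g2_eq]; exact el_sq_2 _
  have hg2sq : (ιQ (1, 0) * tQ ^ 2) ^ (2 : ℤ) = 1 := by
    rw [show (2 : ℤ) = ((2 : ℕ) : ℤ) by norm_num, zpow_natCast]; exact hn
  rw [← hk, ← zpow_add, show k + k = 2 * k by ring, zpow_mul, hg2sq, one_zpow]


/-- The maximal finite subgroups of `Q = ℤ² ⋊ ℤ/4` are, up to conjugacy, exactly
`M₀ = ⟨t⟩ ≅ ℤ/4`, `M₁ = ⟨e₁t⟩ ≅ ℤ/4` and `M₂ = ⟨e₁t²⟩ ≅ ℤ/2`. -/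
theorem stmt_6 :
    (∀ H : Subgroup Q, IsMaximalFinite H ↔
      ∃ q : Q,
        H = MulAut.conj q • Subgroup.zpowers tQ ∨
        H = MulAut.conj q • Subgroup.zpowers (ιQ (1, 0) * tQ) ∨
        H = MulAut.conj q • Subgroup.zpowers (ιQ (1, 0) * tQ ^ 2)) ∧
    orderOf tQ = 4 ∧ orderOf (ιQ (1, 0) * tQ) = 4 ∧ orderOf (ιQ (1, 0) * tQ ^ 2) = 2 ∧
    (∀ q : Q, MulAut.conj q • Subgroup.zpowers tQ ≠ Subgroup.zpowers (ιQ (1, 0) * tQ)) ∧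
    (∀ q : Q, MulAut.conj q • Subgroup.zpowers tQ ≠ Subgroup.zpowers (ιQ (1, 0) * tQ ^ 2)) ∧
    (∀ q : Q,
      MulAut.conj q • Subgroup.zpowers (ιQ (1, 0) * tQ) ≠
        Subgroup.zpowers (ιQ (1, 0) * tQ ^ 2)) := by
  refine ⟨?_, ?_, ?_, ?_, ?_, ?_, ?_⟩
  · intro H
    constructor
    · exact forward
    · rintro ⟨q, rfl | rfl | rfl⟩
      · exact isMaximalFinite_smul _ _ max_tQ
      · exact isMaximalFinite_smul _ _ max_g1
      · exact isMaximalFinite_smul _ _ max_g2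
  · rw [tQ_eq]; exact orderOf_el_1 0
  · rw [g1_eq]; exact orderOf_el_1 (1, 0)
  · rw [g2_eq]; exact orderOf_el_2 (1, 0)
  · intro q h
    have hmem : ιQ (1, 0) * tQ ∈ MulAut.conj q • Subgroup.zpowers tQ := by
      rw [h]; exact Subgroup.mem_zpowers _
    rw [smul_zpowers] at hmem
    obtain ⟨k, hk⟩ := Subgroup.mem_zpowers_iff.mp hmem
    have := congrArg sgm hk
    rw [map_zpow, sgm_conj, g1_eq, sgm_el, tQ_eq, sgm_el] at this
    rw [show sg 0 = 0 by simp [sg], ofAdd_zero, one_zpow] at this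
    rw [show sg (1, 0) = 1 by simp [sg]] at this
    exact absurd this (by decide)
  · intro q h
    have hmem : MulAut.conj q tQ ∈ MulAut.conj q • Subgroup.zpowers tQ := by
      rw [smul_zpowers]; exact Subgroup.mem_zpowers _
    rw [h] at hmem
    refine sq_ne_one_of_zpowers_g2 hmem ?_
    rw [← map_mul]
    intro hc
    have : tQ * tQ = 1 := by
      have := (MulAut.conj q).injective (a₁ := tQ * tQ) (a₂ := 1) (by rw [map_one]; exact hc)
      exact this
    rw [tQ_eq, el_mul, one_eq_el, el_eq_el] at this
    exact absurd this.2 (by decide)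
  · intro q h
    have hmem : MulAut.conj q (ιQ (1, 0) * tQ) ∈
        MulAut.conj q • Subgroup.zpowers (ιQ (1, 0) * tQ) := by
      rw [smul_zpowers]; exact Subgroup.mem_zpowers _
    rw [h] at hmem
    refine sq_ne_one_of_zpowers_g2 hmem ?_
    rw [← map_mul]
    intro hc
    have : (ιQ (1, 0) * tQ) * (ιQ (1, 0) * tQ) = 1 := by
      exact (MulAut.conj q).injective (a₁ := _) (a₂ := 1) (by rw [map_one]; exact hc)
    rw [g1_eq, el_mul, one_eq_el, el_eq_el] at this
    exact absurd this.2 (by decide)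
end

section
/- Let p: G → Q be the surjection from G = Hei ⋊ ℤ/4 to Q = ℤ² ⋊ ℤ/4 sending z ↦ 1, u ↦ e₁, v ↦ e₂, t ↦ t. Then the preimages of the maximal finite subgroups satisfy: p⁻¹(⟨t⟩) = ⟨t,z⟩ ≅ ℤ/4 × ℤ, p⁻¹(⟨e₁t⟩) = ⟨ut⟩ ≅ ℤ, and p⁻¹(⟨e₁t²⟩) = ⟨ut², z⟩ ≅ ℤ/2 × ℤ. -/
open SemidirectProduct

/-- The discrete 3-dimensional Heisenberg group: integer triples `(x,y,z)` corresponding to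
the upper triangular matrix with `x` in position (1,2), `y` in position (1,3) and `z` in
position (2,3). -/
@[ext] structure Hei where
  x : ℤ
  y : ℤ
  z : ℤ

namespace Hei

instance : Mul Hei := ⟨fun a b => ⟨a.x + b.x, a.y + b.y + a.x * b.z, a.z + b.z⟩⟩
instance : One Hei := ⟨⟨0, 0, 0⟩⟩
instance : Inv Hei := ⟨fun a => ⟨-a.x, -a.y + a.x * a.z, -a.z⟩⟩

@[simp] lemma mul_x (a b : Hei) : (a * b).x = a.x + b.x := rfl
@[simp] lemma mul_y (a b : Hei) : (a * b).y = a.y + b.y + a.x * b.z := rfl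
@[simp] lemma mul_z (a b : Hei) : (a * b).z = a.z + b.z := rfl
@[simp] lemma one_x : (1 : Hei).x = 0 := rfl
@[simp] lemma one_y : (1 : Hei).y = 0 := rfl
@[simp] lemma one_z : (1 : Hei).z = 0 := rfl
@[simp] lemma inv_x (a : Hei) : a⁻¹.x = -a.x := rfl
@[simp] lemma inv_y (a : Hei) : a⁻¹.y = -a.y + a.x * a.z := rfl
@[simp] lemma inv_z (a : Hei) : a⁻¹.z = -a.z := rfl

instance : Group Hei where
  mul_assoc a b c := by ext <;> simp <;> ring
  one_mul a := by ext <;> simp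
  mul_one a := by ext <;> simp
  inv_mul_cancel a := by ext <;> simp

/-- The generator `u` of `Hei`. -/
def u : Hei := ⟨1, 0, 0⟩
/-- The generator `v` of `Hei`. -/
def v : Hei := ⟨0, 0, 1⟩
/-- The central generator `z` of `Hei`. -/
def zz : Hei := ⟨0, 1, 0⟩

end Hei

open SemidirectProduct

set_option linter.unreachableTactic false in
set_option linter.unusedTactic false in
/-- The order-four automorphism of `Hei` sending `u ↦ v`, `v ↦ u⁻¹`, `z ↦ z`; in coordinates
`(x,y,z) ↦ (-z, y - xz, x)`. -/
def τ : MulAut Hei where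
  toFun p := ⟨-p.z, p.y - p.x * p.z, p.x⟩
  invFun p := ⟨p.z, p.y - p.z * p.x, -p.x⟩
  left_inv p := by ext <;> simp <;> ring
  right_inv p := by ext <;> simp <;> ring
  map_mul' a b := by ext <;> simp <;> ring

set_option linter.unreachableTactic false in
set_option linter.unusedTactic false in
lemma τ_pow_four : τ ^ 4 = 1 := by
  refine MulEquiv.ext fun p => ?_
  show τ (τ (τ (τ p))) = p
  ext <;> simp [τ] <;> ring

lemma τ_pow_mod (n : ℕ) : τ ^ (n % 4) = τ ^ n := by
  conv_rhs => rw [← Nat.div_add_mod n 4]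
  rw [pow_add, pow_mul, τ_pow_four, one_pow, one_mul]

/-- The action of `ℤ/4` on `Hei` by powers of `τ`. -/
def φG : Multiplicative (ZMod 4) →* MulAut Hei where
  toFun s := τ ^ (Multiplicative.toAdd s).val
  map_one' := by
    show τ ^ (0 : ZMod 4).val = 1
    simp
  map_mul' a b := by
    show τ ^ ((Multiplicative.toAdd a + Multiplicative.toAdd b : ZMod 4)).val = _
    rw [ZMod.val_add, τ_pow_mod, pow_add]

/-- `G = Hei ⋊ ℤ/4`. -/
abbrev G := Hei ⋊[φG] Multiplicative (ZMod 4)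

/-- The generator `t` of the `ℤ/4`-factor of `G`. -/
def tG : G := inr (Multiplicative.ofAdd (1 : ZMod 4))
/-- The element `u` of `G`. -/
def uG : G := inl Hei.u
/-- The element `v` of `G`. -/
def vG : G := inl Hei.v
/-- The central element `z` of `G`. -/
def zG : G := inl Hei.zz

/-- The projection `Hei →* ℤ²` killing the center. -/
def pH : Hei →* Z2 where
  toFun a := Multiplicative.ofAdd (a.x, a.z)
  map_one' := rfl
  map_mul' a b := rfl

lemma pH_comm (n : ℕ) : ∀ a : Hei, pH ((τ ^ n) a) = (Jm ^ n) (pH a) := by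
  induction n with
  | zero => intro a; rfl
  | succ n ih =>
      intro a
      rw [pow_succ, pow_succ]
      simp only [MulAut.mul_apply]
      rw [ih (τ a)]
      rfl

/-- The canonical projection `p : G → Q` with kernel the central subgroup `⟨z⟩ ≅ ℤ`,
sending `z ↦ 1`, `u ↦ e₁`, `v ↦ e₂` and `t ↦ t`. -/
def p : G →* Q :=
  SemidirectProduct.map pH (MonoidHom.id _) (by
    intro g
    refine MonoidHom.ext fun a => ?_
    show pH ((τ ^ (Multiplicative.toAdd g).val) a) =
      (Jm ^ (Multiplicative.toAdd g).val) (pH a)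
    exact pH_comm _ a)

namespace Stmt10Aux

open Multiplicative SemidirectProduct

/-! ### Basic computations -/

lemma zmod_cast_val (s : ZMod 4) : ((s.val : ℤ) : ZMod 4) = s := by
  push_cast
  exact ZMod.natCast_rightInverse s

lemma ofAdd_one_zpow (k : ℤ) :
    (Multiplicative.ofAdd (1 : ZMod 4)) ^ k = Multiplicative.ofAdd ((k : ZMod 4)) := by
  rw [← ofAdd_zsmul]
  congr 1
  simp

lemma tQ_zpow (k : ℤ) : tQ ^ k = inr (Multiplicative.ofAdd ((k : ZMod 4))) := by
  rw [tQ, ← map_zpow, ofAdd_one_zpow]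

lemma tG_zpow (k : ℤ) : tG ^ k = inr (Multiplicative.ofAdd ((k : ZMod 4))) := by
  rw [tG, ← map_zpow, ofAdd_one_zpow]

/-- The homomorphism `ℤ → Hei` onto the centre. -/
def ζ : Multiplicative ℤ →* Hei where
  toFun y := ⟨0, Multiplicative.toAdd y, 0⟩
  map_one' := rfl
  map_mul' a b := by ext <;> simp

lemma zz_zpow (k : ℤ) : Hei.zz ^ k = ⟨0, k, 0⟩ := by
  have : Hei.zz = ζ (Multiplicative.ofAdd 1) := rfl
  rw [this, ← map_zpow]
  show ζ (Multiplicative.ofAdd 1 ^ k) = _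
  rw [← ofAdd_zsmul]
  simp [ζ]

lemma zG_zpow (k : ℤ) : zG ^ k = inl (⟨0, k, 0⟩ : Hei) := by
  rw [zG, ← map_zpow, zz_zpow]

lemma τ_pow_fix (n : ℕ) (h : Hei) (hx : h.x = 0) (hz : h.z = 0) : (τ ^ n) h = h := by
  induction n with
  | zero => rfl
  | succ n ih =>
      rw [pow_succ, MulAut.mul_apply]
      have : τ h = h := by ext <;> simp [τ, hx, hz]
      rw [this, ih]

lemma p_left (g : G) : (p g).left = pH g.left := rfl
lemma p_right (g : G) : (p g).right = g.right := rfl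

lemma pH_eq_iff (h h' : Hei) : pH h = pH h' ↔ h.x = h'.x ∧ h.z = h'.z := by
  constructor
  · intro e
    have := congrArg Multiplicative.toAdd e
    simpa [pH, Prod.ext_iff] using this
  · rintro ⟨e1, e2⟩
    show Multiplicative.ofAdd _ = Multiplicative.ofAdd _
    rw [e1, e2]

/-- Two elements of `G` with the same image under `p` differ by a power of `zG`. -/
lemma eq_zpow_zG_mul {a b : G} (h : p a = p b) :
    a = zG ^ (a.left.y - b.left.y) * b := by
  have hr : a.right = b.right := by
    have := congrArg SemidirectProduct.right h
    simpa [p_right] using this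
  have hl : pH a.left = pH b.left := by
    have := congrArg SemidirectProduct.left h
    simpa [p_left] using this
  rw [pH_eq_iff] at hl
  rw [zG_zpow]
  ext
  · simp [hl.1]
  · simp [map_one]
  · simp [hl.2]
  · simp [hr]

lemma p_tG : p tG = tQ := rfl
lemma p_zG : p zG = 1 := rfl
lemma p_uG : p uG = ιQ (1, 0) := rfl


/-! ### Part 1 : the subgroup `⟨t⟩` -/

lemma mem_comap1_iff (g : G) :
    g ∈ Subgroup.comap p (Subgroup.zpowers tQ) ↔ g.left.x = 0 ∧ g.left.z = 0 := by
  rw [Subgroup.mem_comap, Subgroup.mem_zpowers_iff]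
  constructor
  · rintro ⟨k, hk⟩
    rw [tQ_zpow] at hk
    have h := congrArg SemidirectProduct.left hk
    simp only [left_inr, p_left] at h
    have : pH g.left = pH 1 := by rw [map_one]; exact h.symm
    simpa using (pH_eq_iff _ _).1 this
  · rintro ⟨hx, hz⟩
    refine ⟨((Multiplicative.toAdd g.right).val : ℤ), ?_⟩
    rw [tQ_zpow, zmod_cast_val]
    apply SemidirectProduct.ext
    · show (1 : Z2) = pH g.left
      rw [show pH g.left = Multiplicative.ofAdd (g.left.x, g.left.z) from rfl, hx, hz]
      rfl
    · rfl

lemma eq1 : Subgroup.comap p (Subgroup.zpowers tQ) = Subgroup.closure {tG, zG} := by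
  apply le_antisymm
  · intro g hg
    obtain ⟨k, hk⟩ := Subgroup.mem_zpowers_iff.1 (Subgroup.mem_comap.1 hg)
    have hpk : p (tG ^ k) = p g := by rw [map_zpow, p_tG, hk]
    rw [eq_zpow_zG_mul hpk.symm]
    have htG : tG ∈ Subgroup.closure ({tG, zG} : Set G) := Subgroup.subset_closure (by simp)
    have hzG : zG ∈ Subgroup.closure ({tG, zG} : Set G) := Subgroup.subset_closure (by simp)
    exact mul_mem (zpow_mem hzG _) (zpow_mem htG _)
  · rw [Subgroup.closure_le]
    rintro x hx
    simp only [Set.mem_insert_iff, Set.mem_singleton_iff] at hx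
    rcases hx with rfl | rfl
    · exact Subgroup.mem_comap.2 (by rw [p_tG]; exact Subgroup.mem_zpowers _)
    · exact Subgroup.mem_comap.2 (by rw [p_zG]; exact one_mem _)

lemma φG_apply (s : ZMod 4) (h : Hei) :
    φG (Multiplicative.ofAdd s) h = (τ ^ s.val) h := rfl

def iso1 : (Subgroup.comap p (Subgroup.zpowers tQ)) ≃* Multiplicative (ZMod 4 × ℤ) where
  toFun g := Multiplicative.ofAdd (Multiplicative.toAdd (g : G).right, (g : G).left.y)
  invFun m := ⟨⟨⟨0, (Multiplicative.toAdd m).2, 0⟩,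
      Multiplicative.ofAdd (Multiplicative.toAdd m).1⟩,
    (mem_comap1_iff _).2 ⟨rfl, rfl⟩⟩
  left_inv g := by
    obtain ⟨hx, hz⟩ := (mem_comap1_iff _).1 g.2
    apply Subtype.ext
    ext
    · exact hx.symm
    · rfl
    · exact hz.symm
    · rfl
  right_inv m := rfl
  map_mul' g g' := by
    obtain ⟨hx, hz⟩ := (mem_comap1_iff _).1 g.2
    obtain ⟨hx', hz'⟩ := (mem_comap1_iff _).1 g'.2
    have hfix : φG ((g : G).right) ((g' : G).left) = (g' : G).left := by
      rw [show (g : G).right = Multiplicative.ofAdd (Multiplicative.toAdd (g : G).right) from rfl,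
        φG_apply]
      exact τ_pow_fix _ _ hx' hz'
    show Multiplicative.ofAdd _ = Multiplicative.ofAdd _ * Multiplicative.ofAdd _
    rw [← ofAdd_add]
    apply congrArg Multiplicative.ofAdd
    refine Prod.ext rfl ?_
    · show (((g : G) * (g' : G)).left).y = (g : G).left.y + (g' : G).left.y
      rw [SemidirectProduct.mul_left, hfix]
      simp [hx]

/-! ### Part 2 : the subgroup `⟨e₁t⟩` -/

lemma mk_mul (a : Hei) (s : ZMod 4) (b : Hei) (r : ZMod 4) :
    (⟨a, Multiplicative.ofAdd s⟩ : G) * ⟨b, Multiplicative.ofAdd r⟩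
      = ⟨a * (τ ^ s.val) b, Multiplicative.ofAdd (s + r)⟩ := rfl

lemma gG_eq : uG * tG = (⟨Hei.u, Multiplicative.ofAdd 1⟩ : G) :=
  (mk_eq_inl_mul_inr _ _).symm

lemma val_one : (1 : ZMod 4).val = 1 := rfl
lemma val_two : (2 : ZMod 4).val = 2 := rfl
lemma val_three : (3 : ZMod 4).val = 3 := rfl

lemma gG_sq : (⟨Hei.u, Multiplicative.ofAdd 1⟩ : G) ^ 2
    = ⟨⟨1,1,1⟩, Multiplicative.ofAdd 2⟩ := by
  rw [sq, mk_mul, val_one, pow_one]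
  ext
  · simp [τ, Hei.u]
  · simp [τ, Hei.u]
  · simp [τ, Hei.u]
  · decide

lemma gG_pow_four : (uG * tG) ^ 4 = zG := by
  rw [gG_eq, zG,
    show (⟨Hei.u, Multiplicative.ofAdd 1⟩ : G) ^ 4
        = ((⟨Hei.u, Multiplicative.ofAdd 1⟩ : G) ^ 2) ^ 2 from by
      rw [← pow_mul],
    gG_sq, sq, mk_mul, val_two]
  have hl : (⟨1,1,1⟩ : Hei) * (τ ^ 2) (⟨1,1,1⟩ : Hei) = Hei.zz := by
    rw [sq]
    ext <;> simp [τ, Hei.zz, MulAut.mul_apply]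
  rw [hl, show (2 + 2 : ZMod 4) = 0 from by decide]
  exact (mk_eq_inl_mul_inr _ _).trans (by simp)

lemma gG_zpow_four' : (uG * tG) ^ ((4 : ℕ) : ℤ) = zG := by
  rw [zpow_natCast, gG_pow_four]

lemma gG_zpow_four : (uG * tG) ^ (4 : ℤ) = zG := by
  have h := gG_zpow_four'
  norm_num at h
  exact h

lemma zG_mem_zpowers_gG : zG ∈ Subgroup.zpowers (uG * tG) :=
  ⟨(4 : ℤ), gG_zpow_four⟩

lemma eq2 : Subgroup.comap p (Subgroup.zpowers (ιQ (1, 0) * tQ))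
    = Subgroup.zpowers (uG * tG) := by
  apply le_antisymm
  · intro g hg
    obtain ⟨k, hk⟩ := Subgroup.mem_zpowers_iff.1 (Subgroup.mem_comap.1 hg)
    have hpk : p ((uG * tG) ^ k) = p g := by rw [map_zpow, map_mul, p_uG, p_tG, hk]
    rw [eq_zpow_zG_mul hpk.symm]
    exact mul_mem (zpow_mem zG_mem_zpowers_gG _) (zpow_mem (Subgroup.mem_zpowers _) _)
  · rw [Subgroup.zpowers_le, Subgroup.mem_comap, map_mul, p_uG, p_tG]
    exact Subgroup.mem_zpowers _

lemma gG_inj : Function.Injective (zpowersHom G (uG * tG)) := by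
  rw [injective_iff_map_eq_one]
  intro m hm
  have hk : (uG * tG) ^ (Multiplicative.toAdd m) = 1 := hm
  have h4 : ((Multiplicative.toAdd m : ℤ) : ZMod 4) = 0 := by
    have h := congrArg rightHom hk
    rw [map_zpow, map_one, map_mul, show rightHom uG = 1 from rfl,
      show rightHom tG = Multiplicative.ofAdd 1 from rfl, one_mul, ofAdd_one_zpow] at h
    simpa using h
  obtain ⟨j, hj⟩ := (ZMod.intCast_zmod_eq_zero_iff_dvd _ 4).1 h4
  rw [hj, zpow_mul, gG_zpow_four', zG_zpow] at hk
  have hij := inl_injective hk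
  have hj0 : j = 0 := by
    have := congrArg Hei.y hij
    simpa using this
  have h0 : Multiplicative.toAdd m = 0 := by rw [hj, hj0, mul_zero]
  exact Multiplicative.toAdd.injective h0

lemma range_zpowersHom_gG :
    (zpowersHom G (uG * tG)).range = Subgroup.zpowers (uG * tG) := by
  ext x
  constructor
  · rintro ⟨m, rfl⟩; exact ⟨Multiplicative.toAdd m, rfl⟩
  · rintro ⟨k, rfl⟩; exact ⟨Multiplicative.ofAdd k, rfl⟩

noncomputable def iso2 :
    (Subgroup.comap p (Subgroup.zpowers (ιQ (1, 0) * tQ))) ≃* Multiplicative ℤ :=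
  ((MulEquiv.subgroupCongr eq2).trans
    (MulEquiv.subgroupCongr range_zpowersHom_gG.symm)).trans
    (MonoidHom.ofInjective gG_inj).symm

/-! ### Part 3 : the subgroup `⟨e₁t²⟩` -/

lemma tQ_sq : tQ ^ 2 = inr (Multiplicative.ofAdd (2 : ZMod 4)) := by
  rw [sq, tQ, ← map_mul]
  congr 1

lemma q3_eq : ιQ (1, 0) * tQ ^ 2
    = (⟨Multiplicative.ofAdd (1, 0), Multiplicative.ofAdd 2⟩ : Q) := by
  rw [tQ_sq, ιQ]
  exact (mk_eq_inl_mul_inr _ _).symm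

lemma mk_mulQ (a : ℤ × ℤ) (s : ZMod 4) (b : ℤ × ℤ) (r : ZMod 4) :
    (⟨Multiplicative.ofAdd a, Multiplicative.ofAdd s⟩ : Q)
        * ⟨Multiplicative.ofAdd b, Multiplicative.ofAdd r⟩
      = ⟨Multiplicative.ofAdd a * (Jm ^ s.val) (Multiplicative.ofAdd b),
          Multiplicative.ofAdd (s + r)⟩ := rfl

lemma q3_mul_q3 : ((ιQ (1, 0) * tQ ^ 2) * (ιQ (1, 0) * tQ ^ 2) : Q) = 1 := by
  rw [q3_eq, mk_mulQ, val_two]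
  have hl : (Multiplicative.ofAdd ((1 : ℤ), (0 : ℤ)) : Z2)
      * (Jm ^ 2) (Multiplicative.ofAdd (1, 0)) = 1 := by
    rw [sq]
    show Multiplicative.ofAdd ((1 : ℤ), (0 : ℤ))
        * Jm (Jm (Multiplicative.ofAdd (1, 0))) = 1
    simp [Jm, J, AddEquiv.toMultiplicative, ← ofAdd_add]
  rw [hl, show (2 + 2 : ZMod 4) = 0 from by decide]
  rfl

lemma mem_comap3_iff (g : G) :
    g ∈ Subgroup.comap p (Subgroup.zpowers (ιQ (1, 0) * tQ ^ 2)) ↔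
      (g.left.x = 0 ∧ g.left.z = 0 ∧ g.right = 1) ∨
      (g.left.x = 1 ∧ g.left.z = 0 ∧ g.right = Multiplicative.ofAdd 2) := by
  rw [Subgroup.mem_comap, Subgroup.mem_zpowers_iff]
  constructor
  · rintro ⟨k, hk⟩
    have hq : (ιQ (1, 0) * tQ ^ 2) ^ (2 : ℤ) = 1 := by
      rw [show (2 : ℤ) = ((2 : ℕ) : ℤ) from rfl, zpow_natCast, sq, q3_mul_q3]
    rcases Int.even_or_odd k with ⟨j, hj⟩ | ⟨j, hj⟩
    · left
      have hpg : p g = 1 := by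
        rw [← hk, hj, show j + j = 2 * j by ring, zpow_mul, hq, one_zpow]
      have h1 : pH g.left = pH 1 := by
        rw [map_one]
        exact congrArg SemidirectProduct.left hpg
      obtain ⟨hx, hz⟩ := (pH_eq_iff _ _).1 h1
      exact ⟨by simpa using hx, by simpa using hz, congrArg SemidirectProduct.right hpg⟩
    · right
      have hpg : p g = (⟨Multiplicative.ofAdd (1, 0), Multiplicative.ofAdd 2⟩ : Q) := by
        rw [← hk, hj, zpow_add, zpow_mul, hq, one_zpow, one_mul, zpow_one, q3_eq]
      have h1 : pH g.left = pH Hei.u := congrArg SemidirectProduct.left hpg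
      obtain ⟨hx, hz⟩ := (pH_eq_iff _ _).1 h1
      exact ⟨by simpa [Hei.u] using hx, by simpa [Hei.u] using hz,
        congrArg SemidirectProduct.right hpg⟩
  · rintro (⟨hx, hz, hr⟩ | ⟨hx, hz, hr⟩)
    · refine ⟨0, ?_⟩
      rw [zpow_zero]
      apply SemidirectProduct.ext
      · show (1 : Z2) = pH g.left
        rw [show pH g.left = Multiplicative.ofAdd (g.left.x, g.left.z) from rfl, hx, hz]
        rfl
      · show (1 : Multiplicative (ZMod 4)) = g.right
        rw [hr]
    · refine ⟨1, ?_⟩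
      rw [zpow_one, q3_eq]
      apply SemidirectProduct.ext
      · show Multiplicative.ofAdd ((1 : ℤ), (0 : ℤ)) = pH g.left
        rw [show pH g.left = Multiplicative.ofAdd (g.left.x, g.left.z) from rfl, hx, hz]
      · show Multiplicative.ofAdd (2 : ZMod 4) = g.right
        rw [hr]

lemma eq3 : Subgroup.comap p (Subgroup.zpowers (ιQ (1, 0) * tQ ^ 2))
    = Subgroup.closure {uG * tG ^ 2, zG} := by
  apply le_antisymm
  · intro g hg
    obtain ⟨k, hk⟩ := Subgroup.mem_zpowers_iff.1 (Subgroup.mem_comap.1 hg)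
    have hpk : p ((uG * tG ^ 2) ^ k) = p g := by
      rw [map_zpow, map_mul, map_pow, p_uG, p_tG, hk]
    rw [eq_zpow_zG_mul hpk.symm]
    have h1 : uG * tG ^ 2 ∈ Subgroup.closure ({uG * tG ^ 2, zG} : Set G) :=
      Subgroup.subset_closure (by simp)
    have h2 : zG ∈ Subgroup.closure ({uG * tG ^ 2, zG} : Set G) :=
      Subgroup.subset_closure (by simp)
    exact mul_mem (zpow_mem h2 _) (zpow_mem h1 _)
  · rw [Subgroup.closure_le]
    rintro x hx
    simp only [Set.mem_insert_iff, Set.mem_singleton_iff] at hx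
    rcases hx with rfl | rfl
    · exact Subgroup.mem_comap.2
        (by rw [map_mul, map_pow, p_uG, p_tG]; exact Subgroup.mem_zpowers _)
    · exact Subgroup.mem_comap.2 (by rw [p_zG]; exact one_mem _)

lemma φG_two (h : Hei) :
    φG (Multiplicative.ofAdd (2 : ZMod 4)) h = ⟨-h.x, h.y, -h.z⟩ := by
  rw [φG_apply, val_two, sq]
  show τ (τ h) = _
  ext <;> simp [τ] <;> ring

lemma zmod2_cases : ∀ e : ZMod 2, e = 0 ∨ e = 1 := by decide

/-- The underlying element of `G` for the inverse map of `iso3`. -/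
def i3inv (m : Multiplicative (ZMod 2 × ℤ)) : G :=
  ⟨⟨((Multiplicative.toAdd m).1.val : ℤ), (Multiplicative.toAdd m).2, 0⟩,
    Multiplicative.ofAdd ((2 * (Multiplicative.toAdd m).1.val : ℕ) : ZMod 4)⟩

lemma i3inv_mem (m : Multiplicative (ZMod 2 × ℤ)) :
    i3inv m ∈ Subgroup.comap p (Subgroup.zpowers (ιQ (1, 0) * tQ ^ 2)) := by
  rw [mem_comap3_iff]
  rcases zmod2_cases (Multiplicative.toAdd m).1 with h | h
  · left
    refine ⟨?_, rfl, ?_⟩ <;> simp [i3inv, h]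
  · right
    refine ⟨?_, rfl, ?_⟩ <;> simp [i3inv, h] <;> rfl

def iso3 : (Subgroup.comap p (Subgroup.zpowers (ιQ (1, 0) * tQ ^ 2))) ≃*
    Multiplicative (ZMod 2 × ℤ) where
  toFun g := Multiplicative.ofAdd ((((g : G).left.x : ZMod 2)), (g : G).left.y)
  invFun m := ⟨i3inv m, i3inv_mem m⟩
  left_inv g := by
    rcases (mem_comap3_iff _).1 g.2 with ⟨hx, hz, hr⟩ | ⟨hx, hz, hr⟩ <;>
      apply Subtype.ext <;> ext <;>
      simp [i3inv, hx, hz, hr] <;> rfl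
  right_inv m := by
    apply Multiplicative.toAdd.injective
    refine Prod.ext ?_ rfl
    show ((((Multiplicative.toAdd m).1.val : ℤ)) : ZMod 2) = (Multiplicative.toAdd m).1
    rcases zmod2_cases (Multiplicative.toAdd m).1 with h | h <;> rw [h] <;> rfl
  map_mul' g g' := by
    have hm := (mem_comap3_iff _).1 g.2
    have hm' := (mem_comap3_iff _).1 g'.2
    show Multiplicative.ofAdd _ = Multiplicative.ofAdd _ * Multiplicative.ofAdd _
    rw [← ofAdd_add]
    apply congrArg Multiplicative.ofAdd
    have hmul : ((g : G) * (g' : G)).left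
        = (g : G).left * φG ((g : G).right) ((g' : G).left) := rfl
    rcases hm with ⟨hx, hz, hr⟩ | ⟨hx, hz, hr⟩ <;>
      rcases hm' with ⟨hx', hz', hr'⟩ | ⟨hx', hz', hr'⟩ <;>
      refine Prod.ext ?_ ?_ <;>
      simp [hmul, hr, φG_two, hx, hx', hz, hz'] <;> first | rfl | decide

end Stmt10Aux

/-- For the projection `p : G = Hei ⋊ ℤ/4 → Q = ℤ² ⋊ ℤ/4`, the preimages of the maximal
finite subgroups are `p⁻¹(⟨t⟩) = ⟨t,z⟩ ≅ ℤ/4 × ℤ`, `p⁻¹(⟨e₁t⟩) = ⟨ut⟩ ≅ ℤ` and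
`p⁻¹(⟨e₁t²⟩) = ⟨ut²,z⟩ ≅ ℤ/2 × ℤ`. -/
theorem stmt_10 :
    (Subgroup.comap p (Subgroup.zpowers tQ) = Subgroup.closure {tG, zG} ∧
      Nonempty ((Subgroup.comap p (Subgroup.zpowers tQ)) ≃*
        Multiplicative (ZMod 4 × ℤ))) ∧
    (Subgroup.comap p (Subgroup.zpowers (ιQ (1, 0) * tQ)) = Subgroup.zpowers (uG * tG) ∧
      Nonempty ((Subgroup.comap p (Subgroup.zpowers (ιQ (1, 0) * tQ))) ≃*
        Multiplicative ℤ)) ∧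
    (Subgroup.comap p (Subgroup.zpowers (ιQ (1, 0) * tQ ^ 2)) =
        Subgroup.closure {uG * tG ^ 2, zG} ∧
      Nonempty ((Subgroup.comap p (Subgroup.zpowers (ιQ (1, 0) * tQ ^ 2))) ≃*
        Multiplicative (ZMod 2 × ℤ))) := by
  exact ⟨⟨Stmt10Aux.eq1, ⟨Stmt10Aux.iso1⟩⟩, ⟨Stmt10Aux.eq2, ⟨Stmt10Aux.iso2⟩⟩,
    ⟨Stmt10Aux.eq3, ⟨Stmt10Aux.iso3⟩⟩⟩
end

section
/- Up to conjugacy, the nontrivial finite subgroups of G = Hei ⋊ ℤ/4 are exactly ⟨t⟩ ≅ ℤ/4, ⟨t²⟩ ≅ ℤ/2, and ⟨ut²⟩ ≅ ℤ/2. -/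
open SemidirectProduct

open Pointwise

open SemidirectProduct Multiplicative

@[simp] lemma tau_x (p : Hei) : (τ p).x = -p.z := rfl
@[simp] lemma tau_y (p : Hei) : (τ p).y = p.y - p.x * p.z := rfl
@[simp] lemma tau_z (p : Hei) : (τ p).z = p.x := rfl

@[simp] lemma phi0 (p : Hei) : φG (ofAdd (0 : ZMod 4)) p = p := rfl
@[simp] lemma phi1 (p : Hei) : φG (ofAdd (1 : ZMod 4)) p = τ p := rfl
@[simp] lemma phi2 (p : Hei) : φG (ofAdd (2 : ZMod 4)) p = τ (τ p) := rfl
@[simp] lemma phi3 (p : Hei) : φG (ofAdd (3 : ZMod 4)) p = τ (τ (τ p)) := rfl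

@[simp] lemma s11 : (ofAdd (1 : ZMod 4)) * ofAdd 1 = ofAdd 2 := rfl
@[simp] lemma s21 : (ofAdd (2 : ZMod 4)) * ofAdd 1 = ofAdd 3 := rfl
@[simp] lemma s31 : (ofAdd (3 : ZMod 4)) * ofAdd 1 = 1 := rfl
@[simp] lemma s22 : (ofAdd (2 : ZMod 4)) * ofAdd 2 = 1 := rfl
@[simp] lemma i1 : (ofAdd (1 : ZMod 4))⁻¹ = ofAdd 3 := rfl
@[simp] lemma i2 : (ofAdd (2 : ZMod 4))⁻¹ = ofAdd 2 := rfl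
@[simp] lemma i3 : (ofAdd (3 : ZMod 4))⁻¹ = ofAdd 1 := rfl

lemma pow4_eq (p : Hei) : ((⟨p, ofAdd 1⟩ : G)) ^ 4 = ⟨p * τ p * (τ (τ p)) * (τ (τ (τ p))), 1⟩ := by
  refine SemidirectProduct.ext ?_ ?_
  · simp [pow_succ, mul_left, mul_right]
  · simp [pow_succ, mul_right]

lemma pow2_eq (p : Hei) : ((⟨p, ofAdd 2⟩ : G)) ^ 2 = ⟨p * (τ (τ p)), 1⟩ := by
  refine SemidirectProduct.ext ?_ ?_
  · simp [pow_succ, mul_left, mul_right]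
  · simp [pow_succ, mul_right]

/-- every order-4 torsion element with right component `t` is conjugate to `tG` -/
lemma class4 (p : Hei) (h4 : ((⟨p, ofAdd 1⟩ : G)) ^ 4 = 1) :
    ∃ g : G, g * tG * g⁻¹ = ⟨p, ofAdd 1⟩ := by
  rw [pow4_eq] at h4
  have hl : p * τ p * (τ (τ p)) * (τ (τ (τ p))) = 1 := congrArg SemidirectProduct.left h4
  have hy : 4 * p.y - 2 * p.x * p.z + p.x ^ 2 + p.z ^ 2 = 0 := by
    have := congrArg Hei.y hl
    simp at this; ring_nf at this ⊢; linarith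
  have hpar : ∃ a : ℤ, p.x - p.z = 2 * a := by
    rcases Int.even_or_odd (p.x - p.z) with ⟨k, hk⟩ | ⟨k, hk⟩
    · exact ⟨k, by omega⟩
    · exfalso
      have h1 : (p.x - p.z) ^ 2 = 4 * (k * k) + 4 * k + 1 := by rw [hk]; ring
      have h2 : (p.x - p.z) ^ 2 = -4 * p.y := by ring_nf; ring_nf at hy; linarith
      set m := k * k; omega
  obtain ⟨a, ha⟩ := hpar
  refine ⟨inl ⟨a, 0, p.x - a⟩, ?_⟩
  have h6 : 4 * p.y = -4 * (a * a) := by linear_combination hy - (p.x - p.z + 2*a) * ha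
  have h7 : p.y = -(a * a) := by omega
  refine SemidirectProduct.ext ?_ ?_
  · simp [tG, mul_left, mul_right, inv_left, inv_right]
    refine Hei.ext ?_ ?_ ?_
    · simp
    · simp [h7]; ring
    · simp; linarith [ha]
  · simp [tG, mul_right, inv_right]

/-- every involution with right component `t²` is conjugate to `t²` or `u·t²` -/
lemma class2 (p : Hei) (h2 : ((⟨p, ofAdd 2⟩ : G)) ^ 2 = 1) :
    ∃ g : G, g * tG ^ 2 * g⁻¹ = ⟨p, ofAdd 2⟩ ∨ g * (uG * tG ^ 2) * g⁻¹ = ⟨p, ofAdd 2⟩ := by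
  have ht2 : tG ^ 2 = (⟨1, ofAdd 2⟩ : G) := by
    refine SemidirectProduct.ext ?_ ?_ <;> simp [tG, pow_succ, mul_left, mul_right]
  have hut2 : uG * tG ^ 2 = (⟨Hei.u, ofAdd 2⟩ : G) := by
    rw [ht2]; refine SemidirectProduct.ext ?_ ?_ <;> simp [uG, mul_left, mul_right]
  rw [pow2_eq] at h2
  have hl : p * (τ (τ p)) = 1 := congrArg SemidirectProduct.left h2
  have hy : 2 * p.y - p.x * p.z = 0 := by
    have := congrArg Hei.y hl
    simp at this; linarith
  have half : ∀ y m : ℤ, 2 * y = 2 * m → y = m := fun y m h => by omega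
  rw [hut2, ht2]
  rcases Int.even_or_odd p.x with ⟨A, hA⟩ | ⟨A, hA⟩ <;>
    rcases Int.even_or_odd p.z with ⟨C, hC⟩ | ⟨C, hC⟩
  · -- x, z even : conjugate to t²
    refine ⟨inl ⟨A, 0, C⟩, Or.inl ?_⟩
    have h7 : p.y = 2 * A * C :=
      half _ _ (by linear_combination hy + p.z * hA + 2 * A * hC)
    refine SemidirectProduct.ext ?_ ?_
    · simp [mul_left, mul_right, inv_left, inv_right]
      refine Hei.ext ?_ ?_ ?_
      · simp; linarith [hA]
      · simp [h7]; ring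
      · simp; linarith [hC]
    · simp [mul_right, inv_right]
      try decide
  · -- x even, z odd : conjugate to u t² via mixed conjugator
    refine ⟨⟨⟨A, 0, C⟩, ofAdd 1⟩, Or.inr ?_⟩
    have h7 : p.y = 2 * A * C + A :=
      half _ _ (by linear_combination hy + p.z * hA + 2 * A * hC)
    refine SemidirectProduct.ext ?_ ?_
    · simp [Hei.u, mul_left, mul_right, inv_left, inv_right]
      refine Hei.ext ?_ ?_ ?_
      · simp; linarith [hA]
      · simp [h7]; ring
      · simp; linarith [hC]
    · simp [mul_right, inv_right]
      try decide
  · -- x odd, z even : conjugate to u t²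
    refine ⟨inl ⟨A, 0, C⟩, Or.inr ?_⟩
    have h7 : p.y = 2 * A * C + C :=
      half _ _ (by linear_combination hy + p.z * hA + (2 * A + 1) * hC)
    refine SemidirectProduct.ext ?_ ?_
    · simp [Hei.u, mul_left, mul_right, inv_left, inv_right]
      refine Hei.ext ?_ ?_ ?_
      · simp; linarith [hA]
      · simp [h7]; ring
      · simp; linarith [hC]
    · simp [mul_right, inv_right]
      try decide
  · -- both odd: impossible
    exfalso
    have : ∀ m : ℤ, ¬ (2 * m = (2*A+1) * (2*C+1)) := by
      intro m h; have h2' : 2*m = 4*(A*C) + 2*A + 2*C + 1 := by linear_combination h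
      set k := A*C; omega
    exact this p.y (by rw [← hA, ← hC]; linarith)

lemma hei_pow_x (p : Hei) (n : ℕ) : (p ^ n).x = n * p.x := by
  induction n with
  | zero => simp
  | succ n ih => rw [pow_succ]; simp [ih]; ring

lemma hei_pow_z (p : Hei) (n : ℕ) : (p ^ n).z = n * p.z := by
  induction n with
  | zero => simp
  | succ n ih => rw [pow_succ]; simp [ih]; ring

lemma hei_pow_y (p : Hei) (hx : p.x = 0) (n : ℕ) : (p ^ n).y = n * p.y := by
  induction n with
  | zero => simp
  | succ n ih => rw [pow_succ]; simp [ih, hei_pow_x, hx]; ring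

lemma hei_tf (p : Hei) (n : ℕ) (hn : n ≠ 0) (h : p ^ n = 1) : p = 1 := by
  have hx := congrArg Hei.x h
  have hz := congrArg Hei.z h
  rw [hei_pow_x] at hx; rw [hei_pow_z] at hz
  simp at hx hz
  have hxx : p.x = 0 := hx.resolve_left hn
  have hzz : p.z = 0 := hz.resolve_left hn
  have hy := congrArg Hei.y h
  rw [hei_pow_y p hxx] at hy; simp at hy
  have hyy : p.y = 0 := hy.resolve_left hn
  exact Hei.ext hxx hyy hzz

lemma right_one_torsion (w : G) (hr : w.right = 1) (n : ℕ) (hn : n ≠ 0)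
    (hw : w ^ n = 1) : w = 1 := by
  have hw' : w = inl w.left := by
    conv_lhs => rw [← inl_left_mul_inr_right w]
    rw [hr]; simp
  rw [hw'] at hw ⊢
  rw [← map_pow] at hw
  have : w.left ^ n = 1 := inl_injective (by simpa using hw)
  rw [hei_tf w.left n hn this]; simp

lemma conj_zpowers (g x : G) :
    MulAut.conj g • Subgroup.zpowers x = Subgroup.zpowers (g * x * g⁻¹) := by
  rw [Subgroup.pointwise_smul_def]
  refine (MonoidHom.map_zpowers _ _).trans ?_
  congr 1

lemma zpow_invol {M : Type*} [Group M] {x w : M} (hx : x ^ 2 = 1)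
    (hw : w ∈ Subgroup.zpowers x) : w = 1 ∨ w = x := by
  have hx2 : x ^ (2 : ℤ) = 1 := by
    rw [show (2:ℤ) = ((2:ℕ):ℤ) by norm_num, zpow_natCast, hx]
  obtain ⟨n, rfl⟩ := hw
  rcases Int.even_or_odd n with ⟨k, hk⟩ | ⟨k, hk⟩
  · left
    show x ^ n = 1
    rw [show n = 2 * k by omega, zpow_mul, hx2, one_zpow]
  · right
    show x ^ n = x
    rw [hk, zpow_add, zpow_mul, hx2, one_zpow, one_mul, zpow_one]

@[simp] lemma s01 : (ofAdd (0 : ZMod 4)) = (1 : Multiplicative (ZMod 4)) := rfl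
@[simp] lemma s12 : (ofAdd (1 : ZMod 4)) * ofAdd 2 = ofAdd 3 := rfl
@[simp] lemma s13 : (ofAdd (1 : ZMod 4)) * ofAdd 3 = 1 := rfl
@[simp] lemma s23 : (ofAdd (2 : ZMod 4)) * ofAdd 3 = ofAdd 1 := rfl
@[simp] lemma s32 : (ofAdd (3 : ZMod 4)) * ofAdd 2 = ofAdd 1 := rfl
@[simp] lemma s33 : (ofAdd (3 : ZMod 4)) * ofAdd 3 = ofAdd 2 := rfl

lemma ht2 : tG ^ 2 = (⟨1, ofAdd 2⟩ : G) := by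
  refine SemidirectProduct.ext ?_ ?_ <;> simp [tG, pow_succ, mul_left, mul_right]

lemma hut2 : uG * tG ^ 2 = (⟨Hei.u, ofAdd 2⟩ : G) := by
  rw [ht2]; refine SemidirectProduct.ext ?_ ?_ <;> simp [uG, mul_left, mul_right]

lemma mk_ne_one (p : Hei) (s : Multiplicative (ZMod 4)) (hs : s ≠ 1) :
    (⟨p, s⟩ : G) ≠ 1 := by
  intro h
  exact hs (congrArg SemidirectProduct.right h)

lemma tG4 : tG ^ 4 = 1 := by
  refine SemidirectProduct.ext ?_ ?_ <;> simp [tG, pow_succ, mul_left, mul_right]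

lemma tG_ne_one : tG ≠ 1 := mk_ne_one 1 _ (by decide)

lemma tG2_ne_one : tG ^ 2 ≠ 1 := by rw [ht2]; exact mk_ne_one 1 _ (by decide)

lemma tG3_ne_one : tG ^ 3 ≠ 1 := by
  have h3 : tG ^ 3 = (⟨1, ofAdd 3⟩ : G) := by
    refine SemidirectProduct.ext ?_ ?_ <;> simp [tG, pow_succ, mul_left, mul_right]
  rw [h3]; exact mk_ne_one 1 _ (by decide)

lemma sq_ut : (uG * tG ^ 2) ^ 2 = 1 := by
  rw [hut2, pow2_eq]
  refine SemidirectProduct.ext ?_ ?_ <;> simp [Hei.u]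
  exact Hei.ext (by simp [Hei.u]) (by simp [Hei.u]) (by simp [Hei.u])

lemma ut_ne_one : uG * tG ^ 2 ≠ 1 := by rw [hut2]; exact mk_ne_one _ _ (by decide)

lemma sq_t2 : (tG ^ 2) ^ 2 = 1 := by rw [← pow_mul]; exact tG4

lemma conj_sq {M : Type*} [Group M] (g x : M) : (g * x * g⁻¹) ^ 2 = g * x ^ 2 * g⁻¹ := by
  rw [pow_two, pow_two]; simp [mul_assoc]

lemma zmod4_cases_s11 : ∀ a : ZMod 4, a = 0 ∨ a = 1 ∨ a = 2 ∨ a = 3 := by decide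

lemma conj_t2_x (g : G) : (g * tG ^ 2 * g⁻¹).left.x = 2 * g.left.x := by
  obtain ⟨q, s⟩ := g
  have hs : s = ofAdd (toAdd s) := rfl
  rcases zmod4_cases_s11 (toAdd s) with h | h | h | h <;> rw [hs, h] <;>
    simp [ht2, mul_left, mul_right, inv_left, inv_right] <;> ring

lemma eq_zpowers_4 (H : Subgroup G) (key0 : ∀ w ∈ H, w.right = 1 → w = 1)
    (h : G) (hh : h ∈ H) (hr : h.right = ofAdd 1) : H = Subgroup.zpowers h := by
  have hr2 : (h ^ 2).right = ofAdd 2 := by simp [pow_succ, mul_right, hr]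
  have hr3 : (h ^ 3).right = ofAdd 3 := by simp [pow_succ, mul_right, hr]
  apply le_antisymm
  · intro w hw
    rcases zmod4_cases_s11 (toAdd w.right) with h0 | h1 | h2 | h3
    · rw [key0 w hw (by rw [show w.right = ofAdd (toAdd w.right) from rfl, h0]; rfl)]
      exact one_mem _
    · have he : w * h⁻¹ = 1 := key0 _ (mul_mem hw (inv_mem hh))
        (by rw [mul_right, inv_right, hr, show w.right = ofAdd (toAdd w.right) from rfl, h1]; rfl)
      rw [mul_inv_eq_one.mp he]
      exact Subgroup.mem_zpowers _
    · have he : w * (h ^ 2)⁻¹ = 1 := key0 _ (mul_mem hw (inv_mem (pow_mem hh 2)))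
        (by rw [mul_right, inv_right, hr2, show w.right = ofAdd (toAdd w.right) from rfl, h2]; rfl)
      rw [mul_inv_eq_one.mp he]
      exact pow_mem (Subgroup.mem_zpowers h) 2
    · have he : w * (h ^ 3)⁻¹ = 1 := key0 _ (mul_mem hw (inv_mem (pow_mem hh 3)))
        (by rw [mul_right, inv_right, hr3, show w.right = ofAdd (toAdd w.right) from rfl, h3]; rfl)
      rw [mul_inv_eq_one.mp he]
      exact pow_mem (Subgroup.mem_zpowers h) 3
  · exact Subgroup.zpowers_le.mpr hh

lemma eq_zpowers_2 (H : Subgroup G) (key0 : ∀ w ∈ H, w.right = 1 → w = 1)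
    (hall : ∀ w ∈ H, w.right = 1 ∨ w.right = ofAdd 2)
    (h : G) (hh : h ∈ H) (hr : h.right = ofAdd 2) : H = Subgroup.zpowers h := by
  apply le_antisymm
  · intro w hw
    rcases hall w hw with h1 | h2
    · rw [key0 w hw h1]; exact one_mem _
    · have he : w * h⁻¹ = 1 := key0 _ (mul_mem hw (inv_mem hh))
        (by rw [mul_right, inv_right, hr, h2]; rfl)
      rw [mul_inv_eq_one.mp he]
      exact Subgroup.mem_zpowers _
  · exact Subgroup.zpowers_le.mpr hh

lemma conj_ne_one {M : Type*} [Group M] {g x : M} (hx : x ≠ 1) : g * x * g⁻¹ ≠ 1 := by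
  intro h
  apply hx
  have := congrArg (fun w => g⁻¹ * w * g) h
  simpa [mul_assoc] using this

/-- Up to conjugacy, the nontrivial finite subgroups of `G = Hei ⋊ ℤ/4` are exactly
`⟨t⟩ ≅ ℤ/4`, `⟨t²⟩ ≅ ℤ/2` and `⟨ut²⟩ ≅ ℤ/2`. -/
theorem stmt_11 :
    (∀ H : Subgroup G, H ≠ ⊥ → Finite H →
      ∃ g : G,
        H = MulAut.conj g • Subgroup.zpowers tG ∨
        H = MulAut.conj g • Subgroup.zpowers (tG ^ 2) ∨
        H = MulAut.conj g • Subgroup.zpowers (uG * tG ^ 2)) ∧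
    orderOf tG = 4 ∧ orderOf (tG ^ 2) = 2 ∧ orderOf (uG * tG ^ 2) = 2 ∧
    (∀ g : G, MulAut.conj g • Subgroup.zpowers tG ≠ Subgroup.zpowers (tG ^ 2)) ∧
    (∀ g : G, MulAut.conj g • Subgroup.zpowers tG ≠ Subgroup.zpowers (uG * tG ^ 2)) ∧
    (∀ g : G, MulAut.conj g • Subgroup.zpowers (tG ^ 2) ≠ Subgroup.zpowers (uG * tG ^ 2)) := by
  refine ⟨?_, ?_, ?_, ?_, ?_, ?_, ?_⟩
  · -- classification
    intro H hne hfin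
    have key0 : ∀ w ∈ H, w.right = 1 → w = 1 := by
      intro w hw hr
      have hfo := isOfFinOrder_of_finite (⟨w, hw⟩ : H)
      obtain ⟨n, hn, h1⟩ := isOfFinOrder_iff_pow_eq_one.mp hfo
      refine right_one_torsion w hr n (by omega) ?_
      have := congrArg (Subtype.val) h1
      simpa using this
    by_cases hodd : ∃ w ∈ H, w.right = ofAdd 1 ∨ w.right = ofAdd 3
    · -- contains an order-4 element: conjugate of ⟨t⟩
      obtain ⟨w, hw, hw13⟩ := hodd
      obtain ⟨h, hh, hr⟩ : ∃ h ∈ H, h.right = ofAdd (1 : ZMod 4) := by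
        rcases hw13 with h1 | h3
        · exact ⟨w, hw, h1⟩
        · exact ⟨w⁻¹, inv_mem hw, by rw [inv_right, h3]; rfl⟩
      have h4 : h ^ 4 = 1 := key0 _ (pow_mem hh 4) (by simp [pow_succ, mul_right, hr])
      obtain ⟨p, s⟩ := h
      have hs : s = ofAdd 1 := hr
      subst hs
      obtain ⟨g, hg⟩ := class4 p h4
      refine ⟨g, Or.inl ?_⟩
      rw [conj_zpowers, hg]
      exact eq_zpowers_4 H key0 _ hh rfl
    · -- all elements have order ≤ 2
      push_neg at hodd
      have hall : ∀ w ∈ H, w.right = 1 ∨ w.right = ofAdd 2 := by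
        intro w hw
        have h13 := hodd w hw
        have key : ∀ s : Multiplicative (ZMod 4),
            s ≠ ofAdd 1 → s ≠ ofAdd 3 → s = 1 ∨ s = ofAdd 2 := by decide
        exact key _ h13.1 h13.2
      obtain ⟨h, hh, hr⟩ : ∃ h ∈ H, h.right = ofAdd (2 : ZMod 4) := by
        by_contra hno
        push_neg at hno
        apply hne
        rw [Subgroup.eq_bot_iff_forall]
        intro w hw
        rcases hall w hw with h1 | h2
        · exact key0 w hw h1
        · exact absurd h2 (hno w hw)
      have h2 : h ^ 2 = 1 := key0 _ (pow_mem hh 2) (by simp [pow_succ, mul_right, hr])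
      obtain ⟨p, s⟩ := h
      have hs : s = ofAdd 2 := hr
      subst hs
      obtain ⟨g, hg | hg⟩ := class2 p h2
      · refine ⟨g, Or.inr (Or.inl ?_)⟩
        rw [conj_zpowers, hg]
        exact eq_zpowers_2 H key0 hall _ hh rfl
      · refine ⟨g, Or.inr (Or.inr ?_)⟩
        rw [conj_zpowers, hg]
        exact eq_zpowers_2 H key0 hall _ hh rfl
  · -- orderOf tG = 4
    rw [orderOf_eq_iff (by norm_num)]
    refine ⟨tG4, ?_⟩
    intro m hm hm'
    interval_cases m
    · simpa using tG_ne_one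
    · exact tG2_ne_one
    · exact tG3_ne_one
  · -- orderOf tG² = 2
    rw [orderOf_eq_iff (by norm_num)]
    refine ⟨sq_t2, ?_⟩
    intro m hm hm'
    interval_cases m
    simpa using tG2_ne_one
  · -- orderOf uG tG² = 2
    rw [orderOf_eq_iff (by norm_num)]
    refine ⟨sq_ut, ?_⟩
    intro m hm hm'
    interval_cases m
    simpa using ut_ne_one
  · -- ⟨t⟩ not conjugate to ⟨t²⟩
    intro g heq
    rw [conj_zpowers] at heq
    have hm : g * tG * g⁻¹ ∈ Subgroup.zpowers (tG ^ 2) := by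
      rw [← heq]; exact Subgroup.mem_zpowers _
    rcases zpow_invol sq_t2 hm with h1 | h1
    · exact conj_ne_one tG_ne_one h1
    · have h2 := congrArg (· ^ 2) h1
      rw [conj_sq, sq_t2] at h2
      exact conj_ne_one tG2_ne_one h2
  · -- ⟨t⟩ not conjugate to ⟨ut²⟩
    intro g heq
    rw [conj_zpowers] at heq
    have hm : g * tG * g⁻¹ ∈ Subgroup.zpowers (uG * tG ^ 2) := by
      rw [← heq]; exact Subgroup.mem_zpowers _
    rcases zpow_invol sq_ut hm with h1 | h1
    · exact conj_ne_one tG_ne_one h1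
    · have h2 := congrArg (· ^ 2) h1
      rw [conj_sq, sq_ut] at h2
      exact conj_ne_one tG2_ne_one h2
  · -- ⟨t²⟩ not conjugate to ⟨ut²⟩
    intro g heq
    rw [conj_zpowers] at heq
    have hm : uG * tG ^ 2 ∈ Subgroup.zpowers (g * tG ^ 2 * g⁻¹) := by
      rw [heq]; exact Subgroup.mem_zpowers _
    have hsq : (g * tG ^ 2 * g⁻¹) ^ 2 = 1 := by
      rw [conj_sq, sq_t2]; simp
    rcases zpow_invol hsq hm with h1 | h1
    · exact ut_ne_one h1
    · have hx := congrArg (fun w => w.left.x) h1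
      rw [conj_t2_x] at hx
      rw [hut2] at hx
      have : (1 : ℤ) = 2 * g.left.x := by
        simpa [Hei.u] using hx
      omega
end

section
/- Every virtually cyclic subgroup of Q = ℤ² ⋊ ℤ/4 is finite, infinite cyclic, or isomorphic to the infinite dihedral group D∞. More generally, if Q is a group in which every nontrivial finite subgroup F is contained in a unique maximal finite subgroup M satisfying N_Q(M) = M, then every virtually cyclic subgroup of Q is finite, infinite cyclic, or infinite dihedral. -/
open SemidirectProduct

/-- A group is virtually cyclic if it has a cyclic subgroup of finite index. -/
def VirtuallyCyclic (V : Type*) [Group V] : Prop :=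
  ∃ H : Subgroup V, IsCyclic H ∧ H.index ≠ 0

def PropB (G : Type*) [Group G] : Prop :=
  ∀ f g : G, f ≠ 1 → IsOfFinOrder f → Commute f g → IsOfFinOrder g

lemma isOfFinOrder_coe_iff {Γ : Type*} [Group Γ] {V : Subgroup Γ} (x : V) :
    IsOfFinOrder (x : Γ) ↔ IsOfFinOrder x := by
  simp only [isOfFinOrder_iff_pow_eq_one]
  constructor
  · rintro ⟨n, hn, h⟩
    exact ⟨n, hn, by ext; simpa using h⟩
  · rintro ⟨n, hn, h⟩
    exact ⟨n, hn, by simpa using congrArg Subtype.val h⟩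

lemma propB_subgroup {Γ : Type*} [Group Γ] (h : PropB Γ) (V : Subgroup Γ) : PropB V := by
  intro f g hf hford hcomm
  rw [← isOfFinOrder_coe_iff]
  exact h (f : Γ) (g : Γ) (by simpa using fun h1 => hf (Subtype.ext h1))
    ((isOfFinOrder_coe_iff f).2 hford) (hcomm.map V.subtype)

lemma commute_conj {G : Type*} [Group G] {a b : G} (h : Commute a b) (c : G) :
    Commute (c * a * c⁻¹) (c * b * c⁻¹) := by
  have h1 : (c * a * c⁻¹) * (c * b * c⁻¹) = c * (a * b) * c⁻¹ := by group
  have h2 : (c * b * c⁻¹) * (c * a * c⁻¹) = c * (b * a) * c⁻¹ := by group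
  unfold Commute SemiconjBy at *
  rw [h1, h2, h]

def z0 : ZMod 0 → ℤ := fun i => i

lemma z0_add (i j : ZMod 0) : z0 (i + j) = z0 i + z0 j := rfl
lemma z0_sub (i j : ZMod 0) : z0 (i - j) = z0 i - z0 j := rfl
lemma z0_inj : Function.Injective z0 := fun _ _ h => h

def dihFun {G : Type*} [Group G] (z t : G) : DihedralGroup 0 → G
  | DihedralGroup.r i => z ^ z0 i
  | DihedralGroup.sr i => t * z ^ z0 i

theorem classify (G : Type*) [Group G] (hB : PropB G)
    (hVC : ∃ H : Subgroup G, IsCyclic H ∧ H.index ≠ 0) :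
    Finite G ∨ (Infinite G ∧ IsCyclic G) ∨ Nonempty (G ≃* DihedralGroup 0) := by
  cases finite_or_infinite G with
  | inl h => exact Or.inl h
  | inr hInf =>
  right
  obtain ⟨H, hHc, hHi⟩ := hVC
  haveI : H.FiniteIndex := ⟨hHi⟩
  set K := H.normalCore with hKdef
  haveI hKnormal : K.Normal := H.normalCore_normal
  haveI : K.FiniteIndex := H.finiteIndex_normalCore
  have hKi : K.index ≠ 0 := Subgroup.FiniteIndex.index_ne_zero
  have hKle : K ≤ H := H.normalCore_le
  -- K is cyclic
  haveI hKcyc : IsCyclic K := by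
    haveI := hHc
    exact isCyclic_of_surjective (Subgroup.subgroupOfEquivOfLe hKle).toMonoidHom
      (Subgroup.subgroupOfEquivOfLe hKle).surjective
  -- K is infinite
  haveI hKinf : Infinite K := by
    by_contra hfin
    rw [not_infinite_iff_finite] at hfin
    haveI : Finite (G ⧸ K) := by
      have := hKi
      rw [Subgroup.index] at this
      exact (Nat.card_ne_zero.mp this).2
    exact not_finite_iff_infinite.mpr hInf
      (Finite.of_equiv ((G ⧸ K) × ↥K) Subgroup.groupEquivQuotientProdSubgroup.symm)
  obtain ⟨ζ, hζ⟩ := IsCyclic.exists_generator (α := K)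
  set y : G := (ζ : G) with hydef
  have hyK : y ∈ K := ζ.2
  have hyfin : ¬ IsOfFinOrder y := by
    intro hord
    have : (Subgroup.zpowers (ζ : G) : Set G).Finite := hord.finite_zpowers
    have hKfin : Finite K := by
      have hsub : (K : Set G) ⊆ (Subgroup.zpowers (ζ : G) : Set G) := by
        intro x hx
        obtain ⟨k, hk⟩ := hζ ⟨x, hx⟩
        exact ⟨k, by simpa using congrArg Subtype.val hk⟩
      exact (this.subset hsub).to_subtype
    exact not_finite_iff_infinite.mpr hKinf hKfin
  have hyinj : Function.Injective fun n : ℤ => y ^ n :=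
    injective_zpow_iff_not_isOfFinOrder.mpr hyfin
  have hy : ∀ x ∈ K, ∃ k : ℤ, y ^ k = x := by
    intro x hx
    obtain ⟨k, hk⟩ := hζ ⟨x, hx⟩
    exact ⟨k, by simpa using congrArg Subtype.val hk⟩
  have hconj : ∀ g : G, ∃ n : ℤ, y ^ n = g * y * g⁻¹ :=
    fun g => hy _ (hKnormal.conj_mem y hyK g)
  have star : ∀ g : G, g * y * g⁻¹ = y ∨ g * y * g⁻¹ = y⁻¹ := by
    intro g
    obtain ⟨n, hn⟩ := hconj g
    obtain ⟨m, hm⟩ := hconj g⁻¹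
    rw [inv_inv] at hm
    have key : y ^ (m * n) = y ^ (1 : ℤ) := by
      rw [zpow_mul, hm, zpow_one]
      have h1 : (g⁻¹ * y * g) ^ n = g⁻¹ * y ^ n * g := by
        simpa using conj_zpow (i := n) (a := g⁻¹) (b := y)
      rw [h1, hn]; group
    rcases Int.eq_one_or_neg_one_of_mul_eq_one' (hyinj key) with ⟨_, h2⟩ | ⟨_, h2⟩
    · left; rw [← hn, h2, zpow_one]
    · right; rw [← hn, h2, zpow_neg_one]
  -- the centralizer of y
  set C : Subgroup G := Subgroup.centralizer {y} with hCdef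
  have hmemC : ∀ w : G, w ∈ C ↔ y * w = w * y := by
    intro w
    rw [hCdef, Subgroup.mem_centralizer_iff]
    simp
  have hyC : y ∈ C := (hmemC y).2 rfl
  have hKC : K ≤ C := by
    intro x hx
    obtain ⟨k, hk⟩ := hy x hx
    refine (hmemC x).2 ?_
    rw [← hk]
    exact (Commute.refl y).zpow_right k
  -- C is torsion-free
  have hCtf : ∀ c ∈ C, IsOfFinOrder c → c = 1 := by
    intro c hc hord
    by_contra hne
    exact hyfin (hB c y hne hord ((hmemC c).1 hc).symm)
  -- K inside C has finite index
  have hrel : (K.subgroupOf C).index ≠ 0 := by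
    intro h0
    rw [show (K.subgroupOf C).index = K.relIndex C from rfl] at h0
    exact hKi (by rw [← Subgroup.relIndex_mul_index hKC, h0, zero_mul])
  -- K is contained in the center of C
  have hKcen : ∀ x : C, (x : G) ∈ K → x ∈ Subgroup.center C := by
    intro x hxK
    rw [Subgroup.mem_center_iff]
    intro g
    obtain ⟨k, hk⟩ := hy _ hxK
    have hgy : Commute (g : G) y := ((hmemC _).1 g.2).symm
    have : Commute (g : G) (x : G) := by rw [← hk]; exact hgy.zpow_right k
    exact Subtype.ext (by simpa using this.eq)
  have hcenfi : (Subgroup.center C).index ≠ 0 := by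
    intro h0
    have hdvd := Subgroup.index_dvd_of_le
      (fun x hx => hKcen x ((Subgroup.mem_subgroupOf).1 hx))
    rw [h0] at hdvd
    exact hrel (Nat.eq_zero_of_zero_dvd hdvd)
  haveI : (Subgroup.center C).FiniteIndex := ⟨hcenfi⟩
  -- transfer: C is abelian
  have hCcomm : ∀ a b : C, a * b = b * a := by
    have hinj : Function.Injective (MonoidHom.transferCenterPow C) := by
      rw [injective_iff_map_eq_one]
      intro a ha
      have : (a : C) ^ (Subgroup.center C).index = 1 := by
        have := congrArg Subtype.val ha
        rw [MonoidHom.transferCenterPow_apply] at this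
        simpa using this
      have hford : IsOfFinOrder a :=
        isOfFinOrder_iff_pow_eq_one.2 ⟨_, Nat.pos_of_ne_zero hcenfi, this⟩
      exact Subtype.ext (hCtf _ a.2 ((isOfFinOrder_coe_iff a).2 hford))
    intro a b
    apply hinj
    rw [map_mul, map_mul]
    exact Subtype.ext (Subgroup.mem_center_iff.mp (MonoidHom.transferCenterPow C b).2 _)
  -- the power map into K gives that C is cyclic
  set m := (K.subgroupOf C).index with hmdef
  haveI : (K.subgroupOf C).Normal := hKnormal.subgroupOf C
  have hpow : ∀ c : C, ∃ k : ℤ, y ^ k = (c : G) ^ m := by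
    intro c
    have : c ^ m ∈ K.subgroupOf C := Subgroup.pow_index_mem _ c
    obtain ⟨k, hk⟩ := hy _ ((Subgroup.mem_subgroupOf).1 this)
    exact ⟨k, by simpa using hk⟩
  choose e he using hpow
  have hCcyc : IsCyclic C := by
    have hemul : ∀ a b : C, e (a * b) = e a + e b := by
      intro a b
      apply hyinj
      show y ^ e (a * b) = y ^ (e a + e b)
      rw [he, zpow_add, he, he]
      have hab : ((a : G)) * (b : G) = (b : G) * (a : G) := by
        exact_mod_cast congrArg Subtype.val (hCcomm a b)
      push_cast
      exact Commute.mul_pow hab m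
    let ψ : C →* Multiplicative ℤ :=
      MonoidHom.mk' (fun c => Multiplicative.ofAdd (e c)) (fun a b => by
        show Multiplicative.ofAdd (e (a * b)) = Multiplicative.ofAdd (e a) * Multiplicative.ofAdd (e b)
        rw [hemul]; rfl)
    have hψinj : Function.Injective ψ := by
      rw [injective_iff_map_eq_one]
      intro a ha
      have h0 : e a = 0 := by simpa [ψ] using ha
      have : (a : G) ^ m = 1 := by rw [← he, h0, zpow_zero]
      have hford : IsOfFinOrder a := isOfFinOrder_iff_pow_eq_one.2
        ⟨m, Nat.pos_of_ne_zero hrel, Subtype.ext (by simpa using this)⟩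
      exact Subtype.ext (hCtf _ a.2 ((isOfFinOrder_coe_iff a).2 hford))
    haveI : IsCyclic (↥ψ.range) := Subgroup.isCyclic _
    exact isCyclic_of_surjective (MonoidHom.ofInjective hψinj).symm.toMonoidHom
      (MonoidHom.ofInjective hψinj).symm.surjective
  have fixy : ∀ u : G, u * y * u⁻¹ = y → u ∈ C := by
    intro u h
    refine (hmemC u).2 ?_
    have := congrArg (· * u) h
    simpa [mul_assoc] using this.symm
  by_cases hCtop : C = ⊤
  · -- G itself is cyclic
    left
    refine ⟨hInf, ?_⟩
    rw [hCtop] at hCcyc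
    exact isCyclic_of_surjective (Subgroup.topEquiv (G := G)).toMonoidHom
      (Subgroup.topEquiv (G := G)).surjective
  · -- G is infinite dihedral
    right
    obtain ⟨t, htC⟩ : ∃ t : G, t ∉ C := by
      by_contra hall
      push_neg at hall
      exact hCtop (Subgroup.eq_top_iff' C |>.2 hall)
    have hty : t * y * t⁻¹ = y⁻¹ := by
      rcases star t with h | h
      · exact absurd (fixy t h) htC
      · exact h
    -- a generator z of C
    obtain ⟨ζ', hζ'⟩ := IsCyclic.exists_generator (α := C)
    set z : G := (ζ' : G) with hzdef
    have hzC : z ∈ C := ζ'.2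
    have hzgen : ∀ x ∈ C, ∃ k : ℤ, z ^ k = x := by
      intro x hx
      obtain ⟨k, hk⟩ := hζ' ⟨x, hx⟩
      exact ⟨k, by simpa using congrArg Subtype.val hk⟩
    obtain ⟨a, ha⟩ := hzgen y hyC
    have hzfin : ¬ IsOfFinOrder z := fun h => hyfin (ha ▸ h.zpow)
    have hzinj : Function.Injective fun n : ℤ => z ^ n :=
      injective_zpow_iff_not_isOfFinOrder.mpr hzfin
    -- conjugation preserves C
    have hconjC : ∀ u : G, ∀ w ∈ C, u * w * u⁻¹ ∈ C := by
      intro u w hw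
      have hyw : Commute y w := (hmemC w).1 hw
      have h2 : u⁻¹ * y * u = y ∨ u⁻¹ * y * u = y⁻¹ := by
        simpa using star u⁻¹
      have hc : Commute (u⁻¹ * y * u) w := by
        rcases h2 with h | h
        · rw [h]; exact hyw
        · rw [h]; exact hyw.inv_left
      have := commute_conj hc u
      have hyy : u * (u⁻¹ * y * u) * u⁻¹ = y := by group
      rw [hyy] at this
      exact (hmemC _).2 this.eq
    -- t inverts z
    have htz : t * z * t⁻¹ = z⁻¹ := by
      obtain ⟨k, hk⟩ := hzgen _ (hconjC t z hzC)
      obtain ⟨j, hj⟩ := hzgen _ (hconjC t⁻¹ z hzC)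
      rw [inv_inv] at hj
      have key : z ^ (j * k) = z ^ (1 : ℤ) := by
        rw [zpow_mul, hj, zpow_one]
        have h1 : (t⁻¹ * z * t) ^ k = t⁻¹ * z ^ k * t := by
          simpa using conj_zpow (i := k) (a := t⁻¹) (b := z)
        rw [h1, hk]; group
      rcases Int.eq_one_or_neg_one_of_mul_eq_one' (hzinj key) with ⟨_, h2⟩ | ⟨_, h2⟩
      · exfalso
        rw [h2, zpow_one] at hk
        have hcz : Commute z t := Commute.symm (mul_inv_eq_iff_eq_mul.mp hk.symm)
        have hct : Commute y t := by rw [← ha]; exact hcz.zpow_left a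
        exact htC ((hmemC t).2 hct.eq)
      · rw [← hk, h2, zpow_neg_one]
    have hA : ∀ n : ℤ, t * z ^ n = z ^ (-n) * t := by
      intro n
      have h1 := conj_zpow (i := n) (a := t) (b := z)
      rw [htz, inv_zpow, ← zpow_neg] at h1
      rw [h1]; group
    have hB2 : ∀ n : ℤ, z ^ n * t = t * z ^ (-n) := by
      intro n
      rw [hA, neg_neg]
    -- t is an involution
    have ht2 : t * t = 1 := by
      have htyinv : t * y⁻¹ * t⁻¹ = y := by
        have := congrArg (·⁻¹) hty
        simpa [mul_assoc] using this
      have ht2C : t * t ∈ C := by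
        refine (hmemC _).2 ?_
        have h1 : (t * t) * y * (t * t)⁻¹ = y := by
          have : (t * t) * y * (t * t)⁻¹ = t * (t * y * t⁻¹) * t⁻¹ := by group
          rw [this, hty, htyinv]
        calc y * (t * t) = ((t*t) * y * (t*t)⁻¹) * (t * t) := by rw [h1]
          _ = (t * t) * y := by group
      obtain ⟨b, hb⟩ := hzgen _ ht2C
      have hbeq : z ^ b = z ^ (-b) := by
        have h1 : t * (t * t) * t⁻¹ = t * t := by group
        rw [← hb] at h1
        have h2 : t * z ^ b * t⁻¹ = z ^ (-b) := by
          have h3 := conj_zpow (i := b) (a := t) (b := z)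
          rw [htz, inv_zpow, ← zpow_neg] at h3
          exact h3.symm
        rw [h2] at h1
        exact h1.symm
      have : b = -b := hzinj hbeq
      have hb0 : b = 0 := by omega
      rw [← hb, hb0, zpow_zero]
    -- coset decomposition
    have hcoset : ∀ g : G, g ∈ C ∨ t⁻¹ * g ∈ C := by
      intro g
      by_cases hg : g ∈ C
      · exact Or.inl hg
      · right
        have hgy : g * y * g⁻¹ = y⁻¹ := by
          rcases star g with h | h
          · exact absurd (fixy g h) hg
          · exact h
        refine (hmemC _).2 ?_
        have h2 : (t⁻¹ * g) * y * (t⁻¹ * g)⁻¹ = y := by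
          have e1 : (t⁻¹ * g) * y * (t⁻¹ * g)⁻¹ = t⁻¹ * (g * y * g⁻¹) * t := by group
          rw [e1, hgy]
          have e2 : t⁻¹ * y⁻¹ * t = y := by rw [← hty]; group
          exact e2
        calc y * (t⁻¹ * g) = ((t⁻¹*g) * y * (t⁻¹*g)⁻¹) * (t⁻¹ * g) := by rw [h2]
          _ = (t⁻¹ * g) * y := by group
    have htinv : t⁻¹ = t := inv_eq_of_mul_eq_one_right ht2
    have hmul : ∀ a b : DihedralGroup 0,
        dihFun z t (a * b) = dihFun z t a * dihFun z t b := by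
      rintro (i | i) (j | j)
      · show z ^ z0 (i + j) = z ^ z0 i * z ^ z0 j
        rw [z0_add, zpow_add]
      · show t * z ^ z0 (j - i) = z ^ z0 i * (t * z ^ z0 j)
        rw [z0_sub, ← mul_assoc, hB2, mul_assoc, ← zpow_add]
        have : z0 j - z0 i = -z0 i + z0 j := by ring
        rw [this]
      · show t * z ^ z0 (i + j) = (t * z ^ z0 i) * z ^ z0 j
        rw [z0_add, zpow_add, mul_assoc]
      · show z ^ z0 (j - i) = (t * z ^ z0 i) * (t * z ^ z0 j)
        have e : (t * z ^ z0 i) * (t * z ^ z0 j) = t * (z ^ z0 i * t) * z ^ z0 j := by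
          group
        rw [e, hB2, ← mul_assoc, ht2, one_mul, ← zpow_add, z0_sub]
        have : z0 j - z0 i = -z0 i + z0 j := by ring
        rw [this]
    let F : DihedralGroup 0 →* G := MonoidHom.mk' (dihFun z t) hmul
    have hinj : Function.Injective F := by
      rintro (i | i) (j | j) h
      · have : z ^ z0 i = z ^ z0 j := h
        rw [z0_inj (hzinj this)]
      · exfalso
        have h' : (z ^ z0 i : G) = t * z ^ z0 j := h
        have ht' : t = z ^ (z0 i - z0 j) := by
          rw [zpow_sub]
          rw [h']
          group
        exact htC (ht' ▸ Subgroup.zpow_mem C hzC _)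
      · exfalso
        have h' : (t * z ^ z0 i : G) = z ^ z0 j := h
        have ht' : t = z ^ (z0 j - z0 i) := by
          rw [zpow_sub]
          rw [← h']
          group
        exact htC (ht' ▸ Subgroup.zpow_mem C hzC _)
      · have h' : (t * z ^ z0 i : G) = t * z ^ z0 j := h
        have : z ^ z0 i = z ^ z0 j := mul_left_cancel h'
        rw [z0_inj (hzinj this)]
    have hsurj : Function.Surjective F := by
      intro g
      rcases hcoset g with hg | hg
      · obtain ⟨k, hk⟩ := hzgen g hg
        exact ⟨DihedralGroup.r k, hk⟩
      · obtain ⟨k, hk⟩ := hzgen _ hg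
        refine ⟨DihedralGroup.sr k, ?_⟩
        show t * z ^ z0 k = g
        have hz0 : z0 k = k := rfl
        rw [hz0, hk]
        group
    exact ⟨(MulEquiv.ofBijective F ⟨hinj, hsurj⟩).symm⟩
theorem propB_of_M_NM (Γ : Type*) [Group Γ]
    (hM : ∀ F : Subgroup Γ, F ≠ ⊥ → Finite F →
      ∃! M : Subgroup Γ, IsMaximalFinite M ∧ F ≤ M)
    (hNM : ∀ M : Subgroup Γ, IsMaximalFinite M → Subgroup.normalizer (M : Set Γ) = M) : PropB Γ := by
  simp only [IsMaximalFinite] at hM hNM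
  intro f g hf hford hcomm
  have hFbot : Subgroup.zpowers f ≠ ⊥ := fun h => hf (Subgroup.zpowers_eq_bot.mp h)
  have hFfin : Finite (Subgroup.zpowers f) := hford.finite_zpowers.to_subtype
  obtain ⟨M, ⟨hMmax, hFM⟩, huniq⟩ := hM (Subgroup.zpowers f) hFbot hFfin
  set φ : Γ →* Γ := (MulAut.conj g).toMonoidHom with hφdef
  set ψ : Γ →* Γ := (MulAut.conj g⁻¹).toMonoidHom with hψdef
  have hφψ : ∀ x : Γ, ψ (φ x) = x := by
    intro x
    show g⁻¹ * (g * x * g⁻¹) * g⁻¹⁻¹ = x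
    group
  have hψφ : ∀ x : Γ, φ (ψ x) = x := by
    intro x
    show g * (g⁻¹ * x * g⁻¹⁻¹) * g⁻¹ = x
    group
  have hmapfin : ∀ (N : Subgroup Γ) (χ : Γ →* Γ), Finite N → Finite (N.map χ) := by
    intro N χ hN
    have h1 : (N : Set Γ).Finite := Set.finite_coe_iff.mp hN
    have h2 : ((N.map χ : Subgroup Γ) : Set Γ).Finite := by
      rw [Subgroup.coe_map]
      exact h1.image χ
    exact h2.to_subtype
  -- conjugate of M is maximal finite and contains F
  have hMg : (M.map φ) = M := by
    refine huniq (M.map φ) ⟨⟨hmapfin M φ hMmax.1, ?_⟩, ?_⟩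
    · intro K hK hle
      have hMle : M ≤ K.map ψ := by
        intro x hx
        have h3 : φ x ∈ K := hle (Subgroup.mem_map_of_mem φ hx)
        have h4 := Subgroup.mem_map_of_mem ψ h3
        rwa [hφψ x] at h4
      have hMeq : M = K.map ψ := hMmax.2 _ (hmapfin K ψ hK) hMle
      apply le_antisymm hle
      intro k hk
      have h5 : ψ k ∈ M := by rw [hMeq]; exact Subgroup.mem_map_of_mem ψ hk
      have h6 := Subgroup.mem_map_of_mem φ h5
      rwa [hψφ k] at h6
    · intro x hx
      refine ⟨x, hFM hx, ?_⟩
      obtain ⟨k, hk⟩ := Subgroup.mem_zpowers_iff.mp hx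
      have hcg : Commute g x := by rw [← hk]; exact hcomm.symm.zpow_right k
      show g * x * g⁻¹ = x
      rw [mul_inv_eq_iff_eq_mul]
      exact hcg.eq
  have hgN : g ∈ Subgroup.normalizer (M : Set Γ) := by
    rw [Subgroup.mem_normalizer_iff]
    intro h
    constructor
    · intro hh
      have h7 := Subgroup.mem_map_of_mem φ hh
      rw [hMg] at h7
      exact h7
    · intro hh
      rw [← hMg] at hh
      obtain ⟨m, hm, hme⟩ := hh
      have h8 : g * m * g⁻¹ = g * h * g⁻¹ := hme
      have h9 : m = h := mul_left_cancel (mul_right_cancel h8)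
      exact h9 ▸ hm
  have hgM : g ∈ M := by rw [← hNM M hMmax]; exact hgN
  haveI := hMmax.1
  have h10 : IsOfFinOrder (⟨g, hgM⟩ : M) := isOfFinOrder_of_finite _
  exact (isOfFinOrder_coe_iff (⟨g, hgM⟩ : M)).2 h10

lemma Jm_cycleA (x : Z2) : x * Jm x * Jm (Jm x) * Jm (Jm (Jm x)) = 1 := by
  apply Multiplicative.toAdd.injective
  simp [Jm, J, AddEquiv.toMultiplicative, Prod.ext_iff]

lemma Jm_cycleB (x : Z2) : x * Jm (Jm x) * x * Jm (Jm x) = 1 := by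
  apply Multiplicative.toAdd.injective
  simp [Jm, J, AddEquiv.toMultiplicative, Prod.ext_iff]

lemma Jm_fix1 (x : Z2) (h : Jm x = x) : x = 1 := by
  have hthis := congrArg Multiplicative.toAdd h
  simp [Jm, J, AddEquiv.toMultiplicative, Prod.ext_iff] at hthis
  have hx : Multiplicative.toAdd x = 0 := by
    refine Prod.ext ?_ ?_ <;> simp only [Prod.fst_zero, Prod.snd_zero] <;> omega
  simpa using congrArg Multiplicative.ofAdd hx

lemma Jm_fix2 (x : Z2) (h : Jm (Jm x) = x) : x = 1 := by
  have hthis := congrArg Multiplicative.toAdd h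
  simp [Jm, J, AddEquiv.toMultiplicative, Prod.ext_iff] at hthis
  have hx : Multiplicative.toAdd x = 0 := by
    refine Prod.ext ?_ ?_ <;> simp only [Prod.fst_zero, Prod.snd_zero] <;> omega
  simpa using congrArg Multiplicative.ofAdd hx

lemma Jm_fix3 (x : Z2) (h : Jm (Jm (Jm x)) = x) : x = 1 := by
  have hthis := congrArg Multiplicative.toAdd h
  simp [Jm, J, AddEquiv.toMultiplicative, Prod.ext_iff] at hthis
  have hx : Multiplicative.toAdd x = 0 := by
    refine Prod.ext ?_ ?_ <;> simp only [Prod.fst_zero, Prod.snd_zero] <;> omega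
  simpa using congrArg Multiplicative.ofAdd hx

lemma Jm_cycleC (x : Z2) : x * Jm (Jm (Jm x)) * Jm (Jm x) * Jm x = 1 := by
  apply Multiplicative.toAdd.injective
  simp [Jm, J, AddEquiv.toMultiplicative, Prod.ext_iff]

lemma Z2_tf {x : Z2} {n : ℕ} (hn : n ≠ 0) (h : x ^ n = 1) : x = 1 := by
  have h' : n • (Multiplicative.toAdd x) = (0 : ℤ × ℤ) := by
    rw [← toAdd_pow, h]
    rfl
  have h1 : (n : ℤ) * (Multiplicative.toAdd x).1 = 0 := by
    have := congrArg Prod.fst h'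
    simpa [Prod.smul_def, nsmul_eq_mul] using this
  have h2 : (n : ℤ) * (Multiplicative.toAdd x).2 = 0 := by
    have := congrArg Prod.snd h'
    simpa [Prod.smul_def, nsmul_eq_mul] using this
  have hn' : (n : ℤ) ≠ 0 := Int.natCast_ne_zero.mpr hn
  have hx : Multiplicative.toAdd x = (0 : ℤ × ℤ) := by
    refine Prod.ext ?_ ?_ <;> simp only [Prod.fst_zero, Prod.snd_zero]
    · rcases mul_eq_zero.mp h1 with h | h
      · exact absurd h hn'
      · exact h
    · rcases mul_eq_zero.mp h2 with h | h
      · exact absurd h hn'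
      · exact h
  simpa using congrArg Multiplicative.ofAdd hx

lemma Q_right_cases (u : Multiplicative (ZMod 4)) (h : u ≠ 1) :
    Multiplicative.toAdd u = 1 ∨ Multiplicative.toAdd u = 2 ∨ Multiplicative.toAdd u = 3 := by
  revert h
  revert u
  decide

lemma Q_pow_four (g : Q) (h : g.right ≠ 1) : g ^ 4 = 1 := by
  have h4 : g ^ 4 = g * g * g * g := by rw [pow_succ, pow_succ, pow_succ, pow_one]
  rw [h4]
  have hright : (g * g * g * g).right = (1 : Q).right := by
    have hu : ∀ u : Multiplicative (ZMod 4), u * u * u * u = 1 := by decide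
    simp only [SemidirectProduct.mul_right, SemidirectProduct.one_right]
    exact hu g.right
  refine SemidirectProduct.ext ?_ hright
  simp only [SemidirectProduct.mul_left, SemidirectProduct.mul_right,
    SemidirectProduct.one_left]
  have hphi : ∀ c : Multiplicative (ZMod 4),
      phiQ c = Jm ^ (Multiplicative.toAdd c).val := fun _ => rfl
  rcases Q_right_cases g.right h with h1 | h1 | h1
  · have e1 : phiQ g.right = Jm := by
      rw [hphi, h1, show (1 : ZMod 4).val = 1 from rfl, pow_one]
    have e2 : phiQ (g.right * g.right) = Jm * Jm := by
      rw [hphi, toAdd_mul, h1, show ((1 : ZMod 4) + 1).val = 2 from rfl, pow_two]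
    have e3 : phiQ (g.right * g.right * g.right) = Jm * Jm * Jm := by
      rw [hphi, toAdd_mul, toAdd_mul, h1,
        show ((1 : ZMod 4) + 1 + 1).val = 3 from rfl, pow_succ, pow_two]
    rw [e1, e2, e3]
    simp only [MulAut.mul_apply]
    exact Jm_cycleA g.left
  · have e1 : phiQ g.right = Jm * Jm := by
      rw [hphi, h1, show (2 : ZMod 4).val = 2 from rfl, pow_two]
    have e2 : phiQ (g.right * g.right) = 1 := by
      rw [hphi, toAdd_mul, h1, show ((2 : ZMod 4) + 2).val = 0 from rfl, pow_zero]
    have e3 : phiQ (g.right * g.right * g.right) = Jm * Jm := by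
      rw [hphi, toAdd_mul, toAdd_mul, h1,
        show ((2 : ZMod 4) + 2 + 2).val = 2 from rfl, pow_two]
    rw [e1, e2, e3]
    simp only [MulAut.mul_apply, MulAut.one_apply]
    exact Jm_cycleB g.left
  · have e1 : phiQ g.right = Jm * Jm * Jm := by
      rw [hphi, h1, show (3 : ZMod 4).val = 3 from rfl, pow_succ, pow_two]
    have e2 : phiQ (g.right * g.right) = Jm * Jm := by
      rw [hphi, toAdd_mul, h1, show ((3 : ZMod 4) + 3).val = 2 from rfl, pow_two]
    have e3 : phiQ (g.right * g.right * g.right) = Jm := by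
      rw [hphi, toAdd_mul, toAdd_mul, h1,
        show ((3 : ZMod 4) + 3 + 3).val = 1 from rfl, pow_one]
    rw [e1, e2, e3]
    simp only [MulAut.mul_apply]
    exact Jm_cycleC g.left

lemma propB_Q : PropB Q := by
  intro f g hf hford hcomm
  by_cases hfr : f.right = 1
  · exfalso
    obtain ⟨n, hn, hfn⟩ := isOfFinOrder_iff_pow_eq_one.mp hford
    have hfeq : f = SemidirectProduct.inl f.left := by
      refine SemidirectProduct.ext ?_ ?_ <;> simp [hfr]
    have h5 : SemidirectProduct.inl (φ := phiQ) (f.left ^ n) = 1 := by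
      rw [map_pow, ← hfeq, hfn]
    have hl1 : f.left ^ n = 1 := by
      apply SemidirectProduct.inl_injective (φ := phiQ)
      rw [h5, map_one]
    have : f.left = 1 := Z2_tf hn.ne' hl1
    exact hf (by rw [hfeq, this, map_one])
  · by_cases hgr : g.right = 1
    · have hleft : f.left * phiQ f.right g.left = g.left * phiQ g.right f.left :=
        congrArg SemidirectProduct.left hcomm
      rw [hgr, map_one, MulAut.one_apply] at hleft
      have hfix : phiQ f.right g.left = g.left := by
        have h6 : f.left * phiQ f.right g.left = f.left * g.left := by
          rw [hleft, mul_comm]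
        exact mul_left_cancel h6
      have hphi : phiQ f.right = Jm ^ (Multiplicative.toAdd f.right).val := rfl
      have hgl : g.left = 1 := by
        rcases Q_right_cases f.right hfr with h1 | h1 | h1
        · rw [hphi, h1, show (1 : ZMod 4).val = 1 from rfl, pow_one] at hfix
          exact Jm_fix1 _ hfix
        · rw [hphi, h1, show (2 : ZMod 4).val = 2 from rfl, pow_two] at hfix
          simp only [MulAut.mul_apply] at hfix
          exact Jm_fix2 _ hfix
        · rw [hphi, h1, show (3 : ZMod 4).val = 3 from rfl, pow_succ, pow_two] at hfix
          simp only [MulAut.mul_apply] at hfix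
          exact Jm_fix3 _ hfix
      have hg1 : g = 1 := by
        refine SemidirectProduct.ext ?_ ?_ <;> simp [hgl, hgr]
      rw [hg1]
      exact IsOfFinOrder.one
    · exact isOfFinOrder_iff_pow_eq_one.mpr ⟨4, by norm_num, Q_pow_four g hgr⟩

/-- Every virtually cyclic subgroup of `Q = ℤ² ⋊ ℤ/4` is finite, infinite cyclic or
infinite dihedral.  More generally, this holds in any group satisfying: (M) every nontrivial
finite subgroup is contained in a unique maximal finite subgroup, and (NM) every maximal
finite subgroup is self-normalizing. -/
theorem stmt_13 :
    (∀ V : Subgroup Q, VirtuallyCyclic V →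
      Finite V ∨ (Infinite V ∧ IsCyclic V) ∨ Nonempty (V ≃* DihedralGroup 0)) ∧
    (∀ (Γ : Type) [Group Γ],
      (∀ F : Subgroup Γ, F ≠ ⊥ → Finite F →
        ∃! M : Subgroup Γ, IsMaximalFinite M ∧ F ≤ M) →
      (∀ M : Subgroup Γ, IsMaximalFinite M → Subgroup.normalizer (M : Set Γ) = M) →
      ∀ V : Subgroup Γ, VirtuallyCyclic V →
        Finite V ∨ (Infinite V ∧ IsCyclic V) ∨ Nonempty (V ≃* DihedralGroup 0)) := by
  constructor
  · intro V hV
    exact classify V (propB_subgroup propB_Q V) hV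
  · intro Γ _ hM hNM V hV
    exact classify V (propB_subgroup (propB_of_M_NM Γ hM hNM) V) hV
end

section
/- For a virtually cyclic group V, the following are equivalent: (i) V admits a surjective homomorphism onto ℤ with finite kernel; (ii) the abelianization H₁(V;ℤ) is infinite; (iii) the center of V is infinite. Moreover, an infinite virtually cyclic group not satisfying these conditions admits a surjection onto the infinite dihedral group D∞ with finite kernel. -/
open Subgroup Function

/-- An infinite cyclic group is isomorphic to `Multiplicative ℤ`. -/
lemma vc_equiv (G : Type*) [Group G] [IsCyclic G] [Infinite G] :
    Nonempty (G ≃* Multiplicative ℤ) := by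
  obtain ⟨g, hg⟩ := IsCyclic.exists_generator (α := G)
  have hnf : ¬ IsOfFinOrder g := by
    intro hfin
    have htop : (Subgroup.zpowers g : Subgroup G) = ⊤ := by
      ext x; simpa using hg x
    have : Finite (Subgroup.zpowers g : Subgroup G) := hfin.finite_zpowers
    rw [htop] at this
    exact Finite.not_infinite (Finite.of_equiv _ Subgroup.topEquiv.toEquiv) ‹Infinite G›
  have hinj : Function.Injective (zpowersHom G g) := by
    intro a b hab
    have := (injective_zpow_iff_not_isOfFinOrder.2 hnf)
    exact this hab
  have hsurj : Function.Surjective (zpowersHom G g) := by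
    intro x
    obtain ⟨n, hn⟩ := hg x
    exact ⟨Multiplicative.ofAdd n, hn⟩
  exact ⟨(MulEquiv.ofBijective _ ⟨hinj, hsurj⟩).symm⟩

lemma index_zpowers_mult (a : ℤ) :
    (Subgroup.zpowers (Multiplicative.ofAdd a)).index = a.natAbs := by
  have h : Subgroup.zpowers (Multiplicative.ofAdd a)
      = AddSubgroup.toSubgroup (AddSubgroup.zmultiples a) := by
    ext x
    show x ∈ Subgroup.zpowers (Multiplicative.ofAdd a) ↔
      Multiplicative.toAdd x ∈ AddSubgroup.zmultiples a
    rw [Subgroup.mem_zpowers_iff, AddSubgroup.mem_zmultiples_iff]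
    constructor
    · rintro ⟨k, hk⟩
      exact ⟨k, by rw [← hk]; simp⟩
    · rintro ⟨k, hk⟩
      refine ⟨k, ?_⟩
      rw [← ofAdd_zsmul, hk]
      simp
  rw [h, AddSubgroup.index_toSubgroup, Int.index_zmultiples]

/-- Infinite subgroups of `Multiplicative ℤ` have finite index. -/
lemma mult_int_subgroup_index (S : Subgroup (Multiplicative ℤ)) (hS : Infinite S) :
    S.index ≠ 0 := by
  obtain ⟨g, hg⟩ := IsCyclic.exists_generator (α := S)
  have hSz : S = Subgroup.zpowers (g : Multiplicative ℤ) := by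
    apply le_antisymm
    · intro x hx
      obtain ⟨n, hn⟩ := hg ⟨x, hx⟩
      exact ⟨n, by simpa using congrArg (Subtype.val) hn⟩
    · exact Subgroup.zpowers_le.2 g.2
  have hg1 : (g : Multiplicative ℤ) ≠ 1 := by
    intro h
    have : S = ⊥ := by
      rw [hSz, h]; simp
    rw [this] at hS
    exact Finite.not_infinite (by infer_instance) hS
  have : (g : Multiplicative ℤ) = Multiplicative.ofAdd ((g : Multiplicative ℤ).toAdd) := rfl
  rw [hSz, this, index_zpowers_mult]
  simp only [ne_eq, Int.natAbs_eq_zero]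
  intro h
  exact hg1 (by simpa using congrArg Multiplicative.ofAdd h)

lemma vc_core {V : Type*} [Group V] (h : VirtuallyCyclic V) :
    ∃ C : Subgroup V, C.Normal ∧ IsCyclic C ∧ C.index ≠ 0 := by
  obtain ⟨H, hcyc, hidx⟩ := h
  haveI : H.FiniteIndex := ⟨hidx⟩
  refine ⟨H.normalCore, inferInstance, ?_, Subgroup.FiniteIndex.index_ne_zero⟩
  haveI := hcyc
  exact isCyclic_of_surjective (Subgroup.subgroupOfEquivOfLe H.normalCore_le)
    (Subgroup.subgroupOfEquivOfLe H.normalCore_le).surjective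

/-- In a virtually cyclic group, every infinite subgroup has finite index. -/
lemma vc_index_ne_zero {V : Type*} [Group V] (h : VirtuallyCyclic V)
    (K : Subgroup V) (hK : Infinite K) : K.index ≠ 0 := by
  obtain ⟨C, hnorm, hcyc, hidx⟩ := vc_core h
  haveI := hcyc
  haveI : Infinite C := by
    rw [← not_finite_iff_infinite]
    intro hfin
    haveI := hfin
    have h1 : Nat.card C * C.index = Nat.card V := C.card_mul_index
    have h2 : Nat.card C ≠ 0 := Nat.card_ne_zero.2 ⟨⟨1⟩, hfin⟩
    have h3 : Nat.card V ≠ 0 := h1 ▸ Nat.mul_ne_zero h2 hidx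
    haveI : Finite V := Nat.finite_of_card_ne_zero h3
    exact Finite.not_infinite (Subtype.finite) hK
  obtain ⟨e⟩ := vc_equiv C
  have hrel : C.relIndex K ≠ 0 := by
    intro h0
    exact hidx (Nat.eq_zero_of_zero_dvd (h0 ▸ Subgroup.relIndex_dvd_index_of_normal C K))
  haveI hKC : Infinite (C.subgroupOf K) := by
    have h1 : Nat.card (C.subgroupOf K) * (C.subgroupOf K).index = 0 := by
      rw [(C.subgroupOf K).card_mul_index]
      exact Nat.card_eq_zero_of_infinite
    rcases Nat.mul_eq_zero.1 h1 with h2 | h2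
    · rcases Nat.card_eq_zero.1 h2 with h3 | h3
      · exact (h3.false 1).elim
      · exact h3
    · exact absurd h2 hrel
  set D : Subgroup C := (K ⊓ C).subgroupOf C with hD
  haveI hDinf : Infinite D := by
    have hinj : Function.Injective (fun x : C.subgroupOf K =>
        (⟨⟨((x : K) : V), Subgroup.mem_subgroupOf.1 x.2⟩,
          Subgroup.mem_subgroupOf.2 (Subgroup.mem_inf.2
            ⟨(x : K).2, Subgroup.mem_subgroupOf.1 x.2⟩)⟩ : D)) := by
      intro a b hab
      apply Subtype.ext; apply Subtype.ext
      exact congrArg (fun y : D => ((y : C) : V)) hab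
    exact Infinite.of_injective _ hinj
  have hDidx : D.index ≠ 0 := by
    have hker : e.toMonoidHom.ker ≤ D := by
      rw [(MonoidHom.ker_eq_bot_iff _).2 e.injective]
      exact bot_le
    have hmap : (D.map e.toMonoidHom).index = D.index :=
      Subgroup.index_map_eq D e.surjective hker
    haveI : Infinite (D.map e.toMonoidHom) :=
      (Equiv.infinite_iff (Subgroup.equivMapOfInjective D e.toMonoidHom e.injective).toEquiv).1 hDinf
    rw [← hmap]
    exact mult_int_subgroup_index _ this
  have h5 : (K ⊓ C).relIndex C * C.index = (K ⊓ C).index :=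
    Subgroup.relIndex_mul_index inf_le_right
  have h6 : (K ⊓ C).index ≠ 0 := by
    rw [← h5]
    exact Nat.mul_ne_zero hDidx hidx
  intro h0
  have h7 := Subgroup.index_dvd_of_le (inf_le_left : K ⊓ C ≤ K)
  rw [h0] at h7
  exact h6 (Nat.eq_zero_of_zero_dvd h7)

/-- surjections from a virtually cyclic group onto `ℤ` have finite kernel -/
lemma vc_ker_finite {V : Type*} [Group V] (h : VirtuallyCyclic V)
    (f : V →* Multiplicative ℤ) (hf : Function.Surjective f) : Finite f.ker := by
  by_contra hfin
  haveI : Infinite f.ker := not_finite_iff_infinite.1 hfin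
  have hidx := vc_index_ne_zero h f.ker this
  have : f.ker.index = 0 := by
    have e := QuotientGroup.quotientKerEquivOfSurjective f hf
    haveI : Infinite (V ⧸ f.ker) := (Equiv.infinite_iff e.toEquiv).2 (by infer_instance)
    exact Nat.card_eq_zero_of_infinite
  exact hidx this

/-- A hom onto an infinite subgroup of ℤ can be upgraded to a surjection onto ℤ. -/
lemma vc_of_infinite_range {V : Type*} [Group V] (h : VirtuallyCyclic V)
    (g : V →* Multiplicative ℤ) (hr : Infinite g.range) :
    ∃ f : V →* Multiplicative ℤ, Function.Surjective f ∧ Finite f.ker := by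
  obtain ⟨e⟩ := vc_equiv g.range
  refine ⟨e.toMonoidHom.comp g.rangeRestrict, ?_, ?_⟩
  · exact e.surjective.comp g.rangeRestrict_surjective
  · exact vc_ker_finite h _ (e.surjective.comp g.rangeRestrict_surjective)
lemma finite_index_infinite {V : Type*} [Group V] [Infinite V] (K : Subgroup V)
    (hidx : K.index ≠ 0) : Infinite K := by
  rw [← not_finite_iff_infinite]
  intro hfin
  haveI := hfin
  have h1 : Nat.card K * K.index = Nat.card V := K.card_mul_index
  have h2 : Nat.card K ≠ 0 := Nat.card_ne_zero.2 ⟨⟨1⟩, hfin⟩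
  have h3 : Nat.card V ≠ 0 := h1 ▸ Nat.mul_ne_zero h2 hidx
  exact Finite.not_infinite (Nat.finite_of_card_ne_zero h3) ‹Infinite V›

/-- An infinite commutative virtually cyclic group surjects onto `ℤ` with finite kernel. -/
lemma vc_comm_surj {A : Type*} [CommGroup A] (h : VirtuallyCyclic A) [Infinite A] :
    ∃ f : A →* Multiplicative ℤ, Function.Surjective f ∧ Finite f.ker := by
  obtain ⟨H, hcyc, hidx⟩ := h
  haveI := hcyc
  haveI : Infinite H := finite_index_infinite H hidx
  set n := H.index with hn
  have hmem : ∀ x : A, x ^ n ∈ H := fun x => H.pow_index_mem x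
  let φ : A →* H :=
    { toFun := fun x => ⟨x ^ n, hmem x⟩
      map_one' := by ext; simp
      map_mul' := fun x y => by ext; simp [mul_pow] }
  obtain ⟨e⟩ := vc_equiv H
  set g := e.toMonoidHom.comp φ with hg
  have key : ∀ j : ℤ, g ((e.symm (Multiplicative.ofAdd 1) : H) ^ j)
      = Multiplicative.ofAdd (j * n) := by
    intro j
    set a : H := e.symm (Multiplicative.ofAdd 1) with ha
    have h1 : φ ((a : A) ^ j) = a ^ (j * (n : ℤ)) := by
      ext
      show ((a : A) ^ j) ^ n = ((a ^ (j * (n : ℤ)) : H) : A)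
      rw [← zpow_natCast ((a : A) ^ j), ← zpow_mul]
      push_cast
      try rfl
    show e (φ ((a : A) ^ j)) = _
    rw [h1, map_zpow, MulEquiv.apply_symm_apply]
    rw [← ofAdd_zsmul]
    norm_num
  have hinf : Infinite g.range := by
    refine Infinite.of_injective
      (fun j : ℤ => (⟨g ((e.symm (Multiplicative.ofAdd 1) : H) ^ j), ⟨_, rfl⟩⟩ : g.range)) ?_
    intro j k hjk
    have h2 := congrArg (fun x : g.range => Multiplicative.toAdd (x : Multiplicative ℤ)) hjk
    simp only [key] at h2
    have hn0 : (n : ℤ) ≠ 0 := Int.natCast_ne_zero.2 hidx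
    exact mul_right_cancel₀ hn0 (by simpa using h2)
  exact vc_of_infinite_range ⟨H, hcyc, hidx⟩ g hinf

lemma vc_quotient {V W : Type*} [Group V] [Group W] (h : VirtuallyCyclic V)
    (f : V →* W) (hf : Function.Surjective f) : VirtuallyCyclic W := by
  obtain ⟨H, hcyc, hidx⟩ := h
  haveI := hcyc
  refine ⟨H.map f, isCyclic_of_surjective (f.subgroupMap H) (f.subgroupMap_surjective H), ?_⟩
  intro h0
  exact hidx (Nat.eq_zero_of_zero_dvd (h0 ▸ H.index_map_dvd hf))

lemma ab_surjective {V : Type*} [Group V] :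
    Function.Surjective (Abelianization.of : V →* Abelianization V) := fun y =>
  Quot.inductionOn y fun v => ⟨v, rfl⟩

/-- infinite abelianization gives a surjection onto ℤ -/
lemma ab_infinite_to_P {V : Type*} [Group V] (h : VirtuallyCyclic V)
    (hab : Infinite (Abelianization V)) :
    ∃ f : V →* Multiplicative ℤ, Function.Surjective f ∧ Finite f.ker := by
  haveI := hab
  obtain ⟨f', hf', _⟩ := vc_comm_surj (vc_quotient h Abelianization.of ab_surjective)
  refine ⟨f'.comp Abelianization.of, hf'.comp ab_surjective, ?_⟩
  exact vc_ker_finite h _ (hf'.comp ab_surjective)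

/-- a surjection onto ℤ gives infinite abelianization -/
lemma P_to_ab {V : Type*} [Group V] (f : V →* Multiplicative ℤ)
    (hf : Function.Surjective f) : Infinite (Abelianization V) := by
  rw [← not_finite_iff_infinite]
  intro hfin
  have hsurj : Function.Surjective (Abelianization.lift f) := by
    intro z
    obtain ⟨x, hx⟩ := hf z
    exact ⟨Abelianization.of x, by simp [hx]⟩
  haveI := hfin
  haveI : Finite (Multiplicative ℤ) := Finite.of_surjective _ hsurj
  exact Finite.not_infinite this (by infer_instance)
lemma isCyclic_of_injective' {G C : Type*} [Group G] [Group C] [IsCyclic C]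
    (φ : G →* C) (hφ : Function.Injective φ) : IsCyclic G := by
  have e := MonoidHom.ofInjective hφ
  exact isCyclic_of_surjective e.symm e.symm.surjective

/-- subgroups of virtually cyclic groups are virtually cyclic -/
lemma vc_subgroup {V : Type*} [Group V] (h : VirtuallyCyclic V) (K : Subgroup V) :
    VirtuallyCyclic K := by
  obtain ⟨C, hnorm, hcyc, hidx⟩ := vc_core h
  haveI := hcyc
  refine ⟨C.subgroupOf K, ?_, ?_⟩
  · refine isCyclic_of_injective' (C := C)
      { toFun := fun x => ⟨((x : K) : V), Subgroup.mem_subgroupOf.1 x.2⟩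
        map_one' := rfl
        map_mul' := fun x y => rfl } ?_
    intro a b hab
    apply Subtype.ext; apply Subtype.ext
    exact congrArg (fun y : C => (y : V)) hab
  · intro h0
    exact hidx (Nat.eq_zero_of_zero_dvd (h0 ▸ Subgroup.relIndex_dvd_index_of_normal C K))

/-- infinite center gives a surjection onto ℤ -/
lemma center_to_P {V : Type*} [Group V] (h : VirtuallyCyclic V)
    (hc : Infinite (Subgroup.center V)) :
    ∃ f : V →* Multiplicative ℤ, Function.Surjective f ∧ Finite f.ker := by
  haveI := hc
  have hidx : (Subgroup.center V).index ≠ 0 := vc_index_ne_zero h _ hc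
  haveI : (Subgroup.center V).FiniteIndex := ⟨hidx⟩
  letI : CommGroup (Subgroup.center V) :=
    { (Subgroup.center V).toGroup with
      mul_comm := fun a b => Subtype.ext (Subgroup.mem_center_iff.1 b.2 a) }
  obtain ⟨π, hπ, _⟩ := vc_comm_surj (vc_subgroup h (Subgroup.center V))
  set g := π.comp (MonoidHom.transferCenterPow V) with hgdef
  obtain ⟨u, hu⟩ := hπ (Multiplicative.ofAdd 1)
  set n := (Subgroup.center V).index with hn
  have htr : ∀ j : ℤ, MonoidHom.transferCenterPow V ((u : V) ^ j) = u ^ (j * (n : ℤ)) := by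
    intro j
    apply Subtype.ext
    rw [MonoidHom.transferCenterPow_apply]
    push_cast
    rw [← zpow_natCast ((u : V) ^ j), ← zpow_mul]
  have key : ∀ j : ℤ, g ((u : V) ^ j) = Multiplicative.ofAdd (j * (n : ℤ)) := by
    intro j
    show π (MonoidHom.transferCenterPow V ((u : V) ^ j)) = _
    rw [htr j, map_zpow, hu, ← ofAdd_zsmul]
    norm_num
  have hinf : Infinite g.range := by
    refine Infinite.of_injective (fun j : ℤ => (⟨g ((u : V) ^ j), ⟨_, rfl⟩⟩ : g.range)) ?_
    intro j k hjk
    have h2 := congrArg (fun x : g.range => Multiplicative.toAdd (x : Multiplicative ℤ)) hjk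
    simp only [key] at h2
    exact mul_right_cancel₀ (Int.natCast_ne_zero.2 hidx) (by simpa using h2)
  exact vc_of_infinite_range h g hinf

/-- a surjection onto ℤ with finite kernel gives infinite center -/
lemma P_to_center {V : Type*} [Group V] (f : V →* Multiplicative ℤ)
    (hf : Function.Surjective f) (hker : Finite f.ker) : Infinite (Subgroup.center V) := by
  obtain ⟨v, hv⟩ := hf (Multiplicative.ofAdd 1)
  haveI := hker
  haveI : Finite (MulAut f.ker) :=
    Finite.of_injective (fun e => (e : f.ker → f.ker)) DFunLike.coe_injective
  set ψ : V →* MulAut f.ker := MulAut.conjNormal with hψ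
  set k := orderOf (ψ v) with hk
  have hk0 : 0 < k := orderOf_pos _
  set z := v ^ k with hz
  have hψz : ψ z = 1 := by rw [hz, map_pow, pow_orderOf_eq_one]
  have hzc : ∀ x ∈ f.ker, Commute z x := by
    intro x hx
    have h1 : ((ψ z ⟨x, hx⟩ : f.ker) : V) = z * x * z⁻¹ := MulAut.conjNormal_apply z ⟨x, hx⟩
    rw [hψz] at h1
    simp only [MulAut.one_apply] at h1
    have h2 : x = z * x * z⁻¹ := h1
    show z * x = x * z
    calc z * x = (z * x * z⁻¹) * z := by group
    _ = x * z := by rw [← h2]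
  -- generation
  have htop : Subgroup.closure ((f.ker : Set V) ∪ {v}) = ⊤ := by
    rw [eq_top_iff]
    intro g _
    have hmem1 : v ∈ Subgroup.closure ((f.ker : Set V) ∪ {v}) :=
      Subgroup.subset_closure (Or.inr rfl)
    have hker1 : g * v ^ (-(Multiplicative.toAdd (f g))) ∈ f.ker := by
      rw [MonoidHom.mem_ker, map_mul, map_zpow, hv, ← ofAdd_zsmul]
      simp
    have hmem2 : g * v ^ (-(Multiplicative.toAdd (f g))) ∈
        Subgroup.closure ((f.ker : Set V) ∪ {v}) :=
      Subgroup.subset_closure (Or.inl hker1)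
    have h3 := mul_mem hmem2 (zpow_mem hmem1 (Multiplicative.toAdd (f g)))
    simpa [mul_assoc] using h3
  have hcomm : ∀ g ∈ Subgroup.closure ((f.ker : Set V) ∪ {v}), Commute z g := by
    intro g hg
    induction hg using Subgroup.closure_induction with
    | mem x hx =>
      rcases hx with hx | hx
      · exact hzc x hx
      · rw [Set.mem_singleton_iff] at hx
        rw [hx, hz]
        exact (Commute.refl v).pow_left k
    | one => exact Commute.one_right z
    | mul x y _ _ hx hy => exact hx.mul_right hy
    | inv x _ hx => exact hx.inv_right
  have hzcen : z ∈ Subgroup.center V := by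
    rw [Subgroup.mem_center_iff]
    intro g
    exact (hcomm g (htop ▸ Subgroup.mem_top g)).symm
  have hfz : ∀ j : ℤ, f (z ^ j) = Multiplicative.ofAdd ((k : ℤ) * j) := by
    intro j
    rw [hz, ← zpow_natCast v, ← zpow_mul, map_zpow, hv, ← ofAdd_zsmul]
    norm_num
  refine Infinite.of_injective
    (fun j : ℤ => (⟨z ^ j, Subgroup.zpow_mem _ hzcen j⟩ : Subgroup.center V)) ?_
  intro a b hab
  have h4 := congrArg (fun x : Subgroup.center V => Multiplicative.toAdd (f (x : V))) hab
  simp only [hfz] at h4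
  have hk0' : (k : ℤ) ≠ 0 := Int.natCast_ne_zero.2 hk0.ne'
  exact mul_left_cancel₀ hk0' (by simpa using h4)
/-- An infinite virtually cyclic group that does not surject onto ℤ with finite kernel
surjects onto the infinite dihedral group with finite kernel. -/
lemma vc_dihedral {V : Type*} [Group V] (h : VirtuallyCyclic V) [Infinite V]
    (hnP : ¬ ∃ f : V →* Multiplicative ℤ, Function.Surjective f ∧ Finite f.ker) :
    ∃ f : V →* DihedralGroup 0, Function.Surjective f ∧ Finite f.ker := by
  classical
  obtain ⟨C, hnorm, hcyc, hidx⟩ := vc_core h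
  haveI := hcyc
  haveI : Infinite C := finite_index_infinite C hidx
  obtain ⟨e⟩ := vc_equiv C
  set c : C := e.symm (Multiplicative.ofAdd 1) with hcdef
  have hec : e c = Multiplicative.ofAdd 1 := e.apply_symm_apply _
  have heC : ∀ j : ℤ, e (c ^ j) = Multiplicative.ofAdd j := by
    intro j
    rw [map_zpow, hec, ← ofAdd_zsmul]
    norm_num
  have hgen : ∀ x : C, c ^ (Multiplicative.toAdd (e x)) = x := by
    intro x
    apply e.injective
    rw [heC]
    simp
  have hcinj : Function.Injective fun j : ℤ => (c : V) ^ j := by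
    intro a b hab
    have h1 : e (c ^ a) = e (c ^ b) := by
      congr 1
      exact Subtype.coe_injective (by simpa using hab)
    rw [heC, heC] at h1
    simpa using h1
  -- the conjugation dichotomy
  have hdich : ∀ v : V, v * (c : V) * v⁻¹ = (c : V) ∨ v * (c : V) * v⁻¹ = ((c : V))⁻¹ := by
    intro v
    have hw : v * (c : V) * v⁻¹ ∈ C := hnorm.conj_mem _ c.2 v
    have hw' : v⁻¹ * (c : V) * v ∈ C := by
      simpa using hnorm.conj_mem _ c.2 v⁻¹
    set k := Multiplicative.toAdd (e ⟨_, hw⟩) with hkdef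
    set m := Multiplicative.toAdd (e ⟨_, hw'⟩) with hmdef
    have hwk : v * (c : V) * v⁻¹ = (c : V) ^ k := by
      have h2 := congrArg Subtype.val (hgen ⟨_, hw⟩)
      simpa using h2.symm
    have hwm : v⁻¹ * (c : V) * v = (c : V) ^ m := by
      have h2 := congrArg Subtype.val (hgen ⟨_, hw'⟩)
      simpa using h2.symm
    have hkm : (c : V) = (c : V) ^ (k * m) := by
      calc (c : V) = v * (v⁻¹ * (c : V) * v) * v⁻¹ := by group
      _ = v * ((c : V) ^ m) * v⁻¹ := by rw [hwm]
      _ = (v * (c : V) * v⁻¹) ^ m := by rw [conj_zpow]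
      _ = ((c : V) ^ k) ^ m := by rw [hwk]
      _ = (c : V) ^ (k * m) := by rw [← zpow_mul]
    have h1km : (1 : ℤ) = k * m := hcinj (by simpa using hkm)
    rcases Int.isUnit_iff.1 (IsUnit.of_mul_eq_one (a := k) m h1km.symm) with hk | hk
    · left; rw [hwk, hk, zpow_one]
    · right; rw [hwk, hk]; exact zpow_neg_one _
  have hcne : (c : V) ≠ ((c : V))⁻¹ := by
    intro hcc
    have h1 : (c : V) ^ (1 : ℤ) = (c : V) ^ (-1 : ℤ) := by
      rw [zpow_one, zpow_neg_one]; exact hcc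
    have := hcinj h1
    norm_num at this
  -- if c is central we contradict hnP
  by_cases hcent : ∀ v : V, v * (c : V) * v⁻¹ = (c : V)
  · exfalso
    have hcen : (c : V) ∈ Subgroup.center V := by
      rw [Subgroup.mem_center_iff]
      intro g
      calc g * (c : V) = (g * (c : V) * g⁻¹) * g := by group
      _ = (c : V) * g := by rw [hcent g]
    haveI : Infinite (Subgroup.center V) := Infinite.of_injective
      (fun j : ℤ => (⟨(c : V) ^ j, Subgroup.zpow_mem _ hcen j⟩ : Subgroup.center V))
      (fun a b hab => hcinj (congrArg Subtype.val hab))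
    exact hnP (center_to_P h this)
  push_neg at hcent
  obtain ⟨t, ht⟩ := hcent
  have htc : t * (c : V) * t⁻¹ = ((c : V))⁻¹ := (hdich t).resolve_left ht
  set W := Subgroup.centralizer {(c : V)} with hWdef
  have hmemW : ∀ v : V, v ∈ W ↔ v * (c : V) * v⁻¹ = (c : V) := by
    intro v
    rw [hWdef, Subgroup.mem_centralizer_singleton_iff]
    constructor
    · intro h1; rw [h1]; group
    · intro h1
      calc v * (c : V) = (v * (c : V) * v⁻¹) * v := by group
      _ = (c : V) * v := by rw [h1]
  have hnotW : ∀ v : V, v ∉ W → v * (c : V) * v⁻¹ = ((c : V))⁻¹ := fun v hv =>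
    (hdich v).resolve_left fun h1 => hv ((hmemW v).2 h1)
  have htW : t ∉ W := fun hw => ht ((hmemW t).1 hw)
  have hmul_mem' : ∀ u v : V, u ∉ W → v ∉ W → u * v ∈ W := by
    intro u v hu hv
    rw [hmemW]
    have h1 : (u * v) * (c : V) * (u * v)⁻¹ = u * (v * (c : V) * v⁻¹) * u⁻¹ := by group
    rw [h1, hnotW v hv]
    have h2 : u * ((c : V))⁻¹ * u⁻¹ = (u * (c : V) * u⁻¹)⁻¹ := by group
    rw [h2, hnotW u hu, inv_inv]
  have hmul_notmem₁ : ∀ u v : V, u ∈ W → v ∉ W → u * v ∉ W := by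
    intro u v hu hv hw
    exact hv (by simpa [mul_assoc] using mul_mem (inv_mem hu) hw)
  have hmul_notmem₂ : ∀ u v : V, u ∉ W → v ∈ W → u * v ∉ W := by
    intro u v hu hv hw
    exact hu (by simpa [mul_assoc] using mul_mem hw (inv_mem hv))
  have hinv_not : ∀ v : V, v ∉ W → v⁻¹ ∉ W := fun v hv hw => hv (by simpa using inv_mem hw)
  have ht2 : t * t ∈ W := hmul_mem' t t htW htW
  have hvt : ∀ v : V, v ∉ W → v * t⁻¹ ∈ W := fun v hv =>
    hmul_mem' v t⁻¹ hv (hinv_not t htW)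
  have hCW : C ≤ W := by
    intro x hx
    have h2 := congrArg Subtype.val (hgen ⟨x, hx⟩)
    have h3 : x = (c : V) ^ (Multiplicative.toAdd (e ⟨x, hx⟩)) := by simpa using h2.symm
    rw [hWdef, Subgroup.mem_centralizer_singleton_iff, h3]
    exact (((Commute.refl ((c : V))).zpow_left _).symm).eq.symm
  haveI hWinf : Infinite W :=
    Infinite.of_injective (Subgroup.inclusion hCW) (Subgroup.inclusion_injective hCW)
  have hWvc : VirtuallyCyclic W := vc_subgroup h W
  set cW : W := ⟨(c : V), hCW c.2⟩ with hcWdef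
  have hcWcen : cW ∈ Subgroup.center W := by
    rw [Subgroup.mem_center_iff]
    intro g
    apply Subtype.ext
    show (g : V) * (c : V) = (c : V) * (g : V)
    exact Subgroup.mem_centralizer_singleton_iff.1 g.2
  haveI : Infinite (Subgroup.center W) := by
    refine Infinite.of_injective
      (fun j : ℤ => (⟨cW ^ j, Subgroup.zpow_mem _ hcWcen j⟩ : Subgroup.center W)) ?_
    intro a b hab
    apply hcinj
    have h1 := congrArg (fun x : Subgroup.center W => ((x : W) : V)) hab
    simpa using h1
  obtain ⟨π, hπs, hπk⟩ := center_to_P hWvc this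
  haveI := hπk
  -- kernel of π is exactly the torsion
  have hker_tors : ∀ w : W, π w = 1 → IsOfFinOrder w := by
    intro w hw
    have h1 : IsOfFinOrder (⟨w, MonoidHom.mem_ker.2 hw⟩ : π.ker) := isOfFinOrder_of_finite _
    have h2 := π.ker.subtype.isOfFinOrder h1
    simpa using h2
  have htors_ker : ∀ w : W, IsOfFinOrder w → π w = 1 := by
    intro w hw
    have h2 : IsOfFinOrder (π w) := π.isOfFinOrder hw
    obtain ⟨n, hn, hn1⟩ := isOfFinOrder_iff_pow_eq_one.1 h2
    have h3 : (n : ℤ) * Multiplicative.toAdd (π w) = 0 := by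
      have h4 := congrArg Multiplicative.toAdd hn1
      simpa [toAdd_pow, nsmul_eq_mul] using h4
    rcases mul_eq_zero.1 h3 with h5 | h5
    · exact absurd (Int.natCast_eq_zero.1 h5) hn.ne'
    · rw [← ofAdd_toAdd (π w), h5]; rfl
  -- conjugation by t preserves W
  have htinv : t⁻¹ * (c : V) * t = ((c : V))⁻¹ := by
    simpa using hnotW t⁻¹ (hinv_not t htW)
  have hconjW : ∀ w : W, t * (w : V) * t⁻¹ ∈ W := by
    intro w
    rw [hmemW]
    have hwc : (w : V) * (c : V) * ((w : V))⁻¹ = (c : V) := (hmemW _).1 w.2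
    calc (t * (w : V) * t⁻¹) * (c : V) * (t * (w : V) * t⁻¹)⁻¹
        = t * ((w : V) * (t⁻¹ * (c : V) * t) * ((w : V))⁻¹) * t⁻¹ := by group
      _ = t * ((w : V) * ((c : V))⁻¹ * ((w : V))⁻¹) * t⁻¹ := by rw [htinv]
      _ = t * ((w : V) * (c : V) * ((w : V))⁻¹)⁻¹ * t⁻¹ := by group
      _ = t * ((c : V))⁻¹ * t⁻¹ := by rw [hwc]
      _ = (t * (c : V) * t⁻¹)⁻¹ := by group
      _ = (c : V) := by rw [htc, inv_inv]
  set τ : W →* W :=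
    { toFun := fun w => ⟨t * (w : V) * t⁻¹, hconjW w⟩
      map_one' := by ext; simp
      map_mul' := fun x y => by
        ext
        show t * ((x : V) * (y : V)) * t⁻¹ = (t * (x : V) * t⁻¹) * (t * (y : V) * t⁻¹)
        group } with hτdef
  have hτsurj : Function.Surjective τ := by
    intro w
    have hmem : t⁻¹ * (w : V) * t ∈ W :=
      hmul_mem' _ t (hmul_notmem₂ t⁻¹ (w : V) (hinv_not t htW) w.2) htW
    refine ⟨⟨t⁻¹ * (w : V) * t, hmem⟩, ?_⟩
    ext
    show t * (t⁻¹ * (w : V) * t) * t⁻¹ = (w : V)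
    group
  have hπ's : Function.Surjective (π.comp τ) := hπs.comp hτsurj
  have hker' : ∀ w : W, π w = 1 → π (τ w) = 1 := fun w hw =>
    htors_ker _ (τ.isOfFinOrder (hker_tors w hw))
  obtain ⟨w₀, hw₀⟩ := hπs (Multiplicative.ofAdd 1)
  set a := Multiplicative.toAdd (π (τ w₀)) with hadef
  have key_lin : ∀ w : W, π (τ w) = Multiplicative.ofAdd (a * Multiplicative.toAdd (π w)) := by
    intro w
    set nn := Multiplicative.toAdd (π w) with hnn
    have h1 : π (w * w₀ ^ (-nn)) = 1 := by
      rw [map_mul, map_zpow, hw₀, ← ofAdd_toAdd (π w), ← hnn, ← ofAdd_zsmul]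
      rw [← ofAdd_add]
      norm_num
    have h2 := hker' _ h1
    simp only [map_mul, map_zpow] at h2
    have h3 : π (τ w) = (π (τ w₀)) ^ nn := by
      have h4 := mul_eq_one_iff_eq_inv.1 h2
      rw [h4, ← zpow_neg, neg_neg]
    rw [h3, ← ofAdd_toAdd (π (τ w₀)), ← hadef, ← ofAdd_zsmul]
    congr 1
    rw [smul_eq_mul, mul_comm]
  obtain ⟨w₁, hw₁⟩ := hπ's (Multiplicative.ofAdd 1)
  have h5 : Multiplicative.ofAdd (1 : ℤ) =
      Multiplicative.ofAdd (a * Multiplicative.toAdd (π w₁)) := by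
    rw [← key_lin w₁]
    exact hw₁.symm
  have h6 : a * Multiplicative.toAdd (π w₁) = 1 := (congrArg Multiplicative.toAdd h5).symm
  rcases Int.isUnit_iff.1 (IsUnit.of_mul_eq_one (a := a) _ h6) with ha | ha
  · -- a = 1 : conjugation acts trivially, build a surjection onto ℤ, contradiction
    exfalso
    apply hnP
    have hflip : ∀ w : W, π (τ w) = π w := by
      intro w
      rw [key_lin w, ha, one_mul, ofAdd_toAdd]
    set s := Multiplicative.toAdd (π ⟨t * t, ht2⟩) with hsdef
    set g : V → Multiplicative ℤ := fun v =>
      if hv : v ∈ W then Multiplicative.ofAdd (2 * Multiplicative.toAdd (π ⟨v, hv⟩))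
      else Multiplicative.ofAdd (2 * Multiplicative.toAdd (π ⟨v * t⁻¹, hvt v hv⟩) + s)
      with hgdef
    have hgW : ∀ (v : V) (hv : v ∈ W),
        g v = Multiplicative.ofAdd (2 * Multiplicative.toAdd (π ⟨v, hv⟩)) := fun v hv =>
      dif_pos hv
    have hgnW : ∀ (v : V) (hv : v ∉ W),
        g v = Multiplicative.ofAdd (2 * Multiplicative.toAdd (π ⟨v * t⁻¹, hvt v hv⟩) + s) :=
      fun v hv => dif_neg hv
    set ghom : V →* Multiplicative ℤ :=
      { toFun := g
        map_one' := by
          show g 1 = 1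
          rw [hgW 1 (one_mem W)]
          have h7 : (⟨(1 : V), one_mem W⟩ : W) = 1 := rfl
          rw [h7, map_one]
          rfl
        map_mul' := by
          intro x y
          show g (x * y) = g x * g y
          by_cases hx : x ∈ W <;> by_cases hy : y ∈ W
          · have hxy : x * y ∈ W := mul_mem hx hy
            rw [hgW _ hxy, hgW _ hx, hgW _ hy]
            have h7 : (⟨x * y, hxy⟩ : W) = ⟨x, hx⟩ * ⟨y, hy⟩ := rfl
            rw [h7, map_mul π, toAdd_mul, ← ofAdd_add]
            congr 1
            ring
          · have hxy : x * y ∉ W := hmul_notmem₁ x y hx hy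
            rw [hgnW _ hxy, hgW _ hx, hgnW _ hy]
            have h7 : (⟨x * y * t⁻¹, hvt _ hxy⟩ : W) = ⟨x, hx⟩ * ⟨y * t⁻¹, hvt y hy⟩ :=
              Subtype.ext (by show x * y * t⁻¹ = x * (y * t⁻¹); group)
            rw [h7, map_mul π, toAdd_mul, ← ofAdd_add]
            congr 1
            ring
          · have hxy : x * y ∉ W := hmul_notmem₂ x y hx hy
            rw [hgnW _ hxy, hgnW _ hx, hgW _ hy]
            have h7 : (⟨x * y * t⁻¹, hvt _ hxy⟩ : W) = ⟨x * t⁻¹, hvt x hx⟩ * τ ⟨y, hy⟩ :=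
              Subtype.ext (by show x * y * t⁻¹ = (x * t⁻¹) * (t * y * t⁻¹); group)
            rw [h7, map_mul π, hflip, toAdd_mul, ← ofAdd_add]
            congr 1
            ring
          · have hxy : x * y ∈ W := hmul_mem' x y hx hy
            rw [hgW _ hxy, hgnW _ hx, hgnW _ hy]
            have h7 : (⟨x * y, hxy⟩ : W)
                = ⟨x * t⁻¹, hvt x hx⟩ * τ ⟨y * t⁻¹, hvt y hy⟩ * ⟨t * t, ht2⟩ :=
              Subtype.ext (by
                show x * y = (x * t⁻¹) * (t * (y * t⁻¹) * t⁻¹) * (t * t)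
                group)
            rw [h7, map_mul π, map_mul π, hflip, toAdd_mul, toAdd_mul, ← hsdef, ← ofAdd_add]
            congr 1
            ring } with hghom
    have hginf : Infinite ghom.range := by
      refine Infinite.of_injective
        (fun j : ℤ => (⟨ghom ((w₀ : V) ^ j), ⟨_, rfl⟩⟩ : ghom.range)) ?_
      intro i j hij
      have hmem : ∀ j : ℤ, ((w₀ : V) ^ j) ∈ W := fun j => by
        simpa using Subgroup.zpow_mem W w₀.2 j
      have hval : ∀ j : ℤ, ghom ((w₀ : V) ^ j) = Multiplicative.ofAdd (2 * j) := by
        intro j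
        show g _ = _
        rw [hgW _ (hmem j)]
        have h8 : (⟨(w₀ : V) ^ j, hmem j⟩ : W) = w₀ ^ j := by
          ext; simp
        rw [h8, map_zpow, hw₀, ← ofAdd_zsmul]
        congr 1
        simp [smul_eq_mul, mul_comm]
      have h9 := congrArg (fun x : ghom.range => Multiplicative.toAdd (x : Multiplicative ℤ)) hij
      simp only [hval] at h9
      have h10 : (2 : ℤ) * i = 2 * j := by simpa using h9
      omega
    exact vc_of_infinite_range h ghom hginf
  · -- a = -1 : build the dihedral quotient
    set pa : W → ℤ := fun w => Multiplicative.toAdd (π w) with hpadef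
    have pa_mul : ∀ x y : W, pa (x * y) = pa x + pa y := by
      intro x y
      simp only [hpadef, map_mul, toAdd_mul]
    have hflip : ∀ w : W, pa (τ w) = -(pa w) := by
      intro w
      simp only [hpadef, key_lin w, ha, toAdd_ofAdd]
      ring
    have pa_t2 : pa ⟨t * t, ht2⟩ = 0 := by
      have h7 : τ ⟨t * t, ht2⟩ = ⟨t * t, ht2⟩ :=
        Subtype.ext (by show t * (t * t) * t⁻¹ = t * t; group)
      have h8 := hflip ⟨t * t, ht2⟩
      rw [h7] at h8
      omega
    have pa_surj : ∀ i : ℤ, ∃ w : W, pa w = i := by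
      intro i
      obtain ⟨w, hw⟩ := hπs (Multiplicative.ofAdd i)
      exact ⟨w, by simp [hpadef, hw]⟩
    have pa_ker : ∀ w : W, pa w = 0 → π w = 1 := by
      intro w hw
      have : π w = Multiplicative.ofAdd (pa w) := by simp [hpadef]
      rw [this, hw]
      rfl
    set f : V → DihedralGroup 0 := fun v =>
      if hv : v ∈ W then DihedralGroup.r (pa ⟨v, hv⟩)
      else DihedralGroup.sr (-(pa ⟨v * t⁻¹, hvt v hv⟩))
      with hfdef
    have hfW : ∀ (v : V) (hv : v ∈ W), f v = DihedralGroup.r (pa ⟨v, hv⟩) :=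
      fun v hv => dif_pos hv
    have hfnW : ∀ (v : V) (hv : v ∉ W),
        f v = DihedralGroup.sr (-(pa ⟨v * t⁻¹, hvt v hv⟩)) :=
      fun v hv => dif_neg hv
    set fhom : V →* DihedralGroup 0 :=
      { toFun := f
        map_one' := by
          show f 1 = 1
          rw [hfW 1 (one_mem W)]
          have h7 : (⟨(1 : V), one_mem W⟩ : W) = 1 := rfl
          rw [h7]
          have h8 : pa 1 = 0 := by simp [hpadef]
          rw [h8]
          rfl
        map_mul' := by
          intro x y
          show f (x * y) = f x * f y
          by_cases hx : x ∈ W <;> by_cases hy : y ∈ W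
          · have hxy : x * y ∈ W := mul_mem hx hy
            rw [hfW _ hxy, hfW _ hx, hfW _ hy]
            erw [DihedralGroup.r_mul_r]
            have h7 : (⟨x * y, hxy⟩ : W) = ⟨x, hx⟩ * ⟨y, hy⟩ := rfl
            rw [h7, pa_mul]
            rfl
          · have hxy : x * y ∉ W := hmul_notmem₁ x y hx hy
            rw [hfnW _ hxy, hfW _ hx, hfnW _ hy]
            erw [DihedralGroup.r_mul_sr]
            have h7 : (⟨x * y * t⁻¹, hvt _ hxy⟩ : W) = ⟨x, hx⟩ * ⟨y * t⁻¹, hvt y hy⟩ :=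
              Subtype.ext (by show x * y * t⁻¹ = x * (y * t⁻¹); group)
            rw [h7, pa_mul]
            congr 1
            change @Eq ℤ _ _
            omega
          · have hxy : x * y ∉ W := hmul_notmem₂ x y hx hy
            rw [hfnW _ hxy, hfnW _ hx, hfW _ hy]
            erw [DihedralGroup.sr_mul_r]
            have h7 : (⟨x * y * t⁻¹, hvt _ hxy⟩ : W) = ⟨x * t⁻¹, hvt x hx⟩ * τ ⟨y, hy⟩ :=
              Subtype.ext (by show x * y * t⁻¹ = (x * t⁻¹) * (t * y * t⁻¹); group)
            rw [h7, pa_mul, hflip]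
            congr 1
            change @Eq ℤ _ _
            omega
          · have hxy : x * y ∈ W := hmul_mem' x y hx hy
            rw [hfW _ hxy, hfnW _ hx, hfnW _ hy]
            erw [DihedralGroup.sr_mul_sr]
            have h7 : (⟨x * y, hxy⟩ : W)
                = ⟨x * t⁻¹, hvt x hx⟩ * τ ⟨y * t⁻¹, hvt y hy⟩ * ⟨t * t, ht2⟩ :=
              Subtype.ext (by
                show x * y = (x * t⁻¹) * (t * (y * t⁻¹) * t⁻¹) * (t * t)
                group)
            rw [h7, pa_mul, pa_mul, hflip, pa_t2]
            congr 1
            change @Eq ℤ _ _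
            omega } with hfhom
    refine ⟨fhom, ?_, ?_⟩
    · -- surjectivity
      rintro (i | i)
      · obtain ⟨w, hw⟩ := pa_surj i
        refine ⟨(w : V), ?_⟩
        show f _ = _
        rw [hfW _ w.2]
        have h8 : (⟨(w : V), w.2⟩ : W) = w := rfl
        rw [h8, hw]
      · obtain ⟨w, hw⟩ := pa_surj (-i)
        refine ⟨(w : V) * t, ?_⟩
        have hwt : (w : V) * t ∉ W := hmul_notmem₁ _ t w.2 htW
        show f _ = _
        rw [hfnW _ hwt]
        have h8 : (⟨(w : V) * t * t⁻¹, hvt _ hwt⟩ : W) = w := Subtype.ext (by group)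
        rw [h8, hw]
        congr 1
        exact neg_neg (G := ℤ) i
    · -- finite kernel
      have hsub : ∀ v ∈ fhom.ker, v ∈ W := by
        intro v hv
        rw [MonoidHom.mem_ker] at hv
        by_contra hvW
        have h9 := hfnW v hvW
        rw [show fhom v = f v from rfl, h9] at hv
        exact absurd hv (by simp [DihedralGroup.one_def, -DihedralGroup.r_zero])
      have hinj2 : ∀ v ∈ fhom.ker, ∃ hw : v ∈ W, π ⟨v, hw⟩ = 1 := by
        intro v hv
        have hw := hsub v hv
        refine ⟨hw, ?_⟩
        have h9 : fhom v = 1 := hv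
        rw [show fhom v = f v from rfl, hfW v hw] at h9
        rw [DihedralGroup.one_def] at h9
        have h10 : pa ⟨v, hw⟩ = 0 := by injection h9
        exact pa_ker _ h10
      refine Finite.of_injective (fun x : fhom.ker =>
        (⟨⟨(x : V), (hinj2 x x.2).choose⟩, MonoidHom.mem_ker.2 (hinj2 x x.2).choose_spec⟩ :
          π.ker)) ?_
      intro x y hxy
      apply Subtype.ext
      have h11 := congrArg (fun z : π.ker => ((z : W) : V)) hxy
      simpa using h11

/-- For a virtually cyclic group `V` the following are equivalent: (i) `V` surjects onto `ℤ`
with finite kernel; (ii) the abelianization `H₁(V;ℤ)` of `V` is infinite; (iii) the center of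
`V` is infinite.  Moreover an infinite virtually cyclic group not satisfying these conditions
surjects onto the infinite dihedral group `D∞` with finite kernel. -/
theorem stmt_14 :
    ∀ (V : Type) [Group V], VirtuallyCyclic V →
      ((∃ f : V →* Multiplicative ℤ, Function.Surjective f ∧ Finite f.ker) ↔
        Infinite (Abelianization V)) ∧
      ((∃ f : V →* Multiplicative ℤ, Function.Surjective f ∧ Finite f.ker) ↔
        Infinite (Subgroup.center V)) ∧
      (Infinite V →
        ¬ (∃ f : V →* Multiplicative ℤ, Function.Surjective f ∧ Finite f.ker) →
        ∃ f : V →* DihedralGroup 0, Function.Surjective f ∧ Finite f.ker) := by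
  intro V _ hvc
  refine ⟨⟨?_, ?_⟩, ⟨?_, ?_⟩, ?_⟩
  · rintro ⟨f, hf, -⟩
    exact P_to_ab f hf
  · intro hab
    exact ab_infinite_to_P hvc hab
  · rintro ⟨f, hf, hker⟩
    exact P_to_center f hf hker
  · intro hc
    exact center_to_P hvc hc
  · intro hV hnP
    haveI := hV
    exact vc_dihedral hvc hnP
end

section
/- Let V be an infinite virtually cyclic subgroup of G = Hei ⋊ ℤ/4 whose image p(V) in Q = ℤ² ⋊ ℤ/4 is finite, where p: G → Q has central kernel ⟨z⟩ ≅ ℤ. Then V contains a central infinite cyclic subgroup and hence admits a surjection onto ℤ. (The key point: V ∩ ⟨z⟩ is infinite cyclic and p(V) is a finite group of odd order in the relevant decomposition, giving a central infinite cyclic subgroup of V.) -/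
open SemidirectProduct

open SemidirectProduct

section Aux

lemma tau_fix_zz (n : ℕ) : (τ ^ n) Hei.zz = Hei.zz := by
  induction n with
  | zero => rfl
  | succ n ih =>
      rw [pow_succ, MulAut.mul_apply]
      have h : τ Hei.zz = Hei.zz := by
        ext <;> simp [τ, Hei.zz]
      rw [h, ih]

lemma hei_zz_comm (a : Hei) : a * Hei.zz = Hei.zz * a := by
  ext <;> simp [Hei.zz] <;> ring

lemma zG_mem_center : zG ∈ Subgroup.center G := by
  rw [Subgroup.mem_center_iff]
  intro g
  refine SemidirectProduct.ext ?_ ?_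
  · show g.left * φG g.right Hei.zz = Hei.zz * (φG 1 g.left)
    have h1 : φG g.right Hei.zz = Hei.zz := tau_fix_zz _
    rw [h1, map_one φG, MulAut.one_apply, hei_zz_comm]
  · show g.right * 1 = 1 * g.right
    rw [mul_one, one_mul]

lemma mem_ker_p {g : G} :
    g ∈ p.ker ↔ (g.left.x = 0 ∧ g.left.z = 0 ∧ g.right = 1) := by
  rw [MonoidHom.mem_ker]
  constructor
  · intro h
    have h1 : pH g.left = 1 := by
      have := congrArg SemidirectProduct.left h
      simpa [p, SemidirectProduct.map_left] using this
    have h2 : g.right = 1 := by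
      have := congrArg SemidirectProduct.right h
      simpa [p, SemidirectProduct.map_right] using this
    have h3 : (g.left.x, g.left.z) = (0, 0) := congrArg Multiplicative.toAdd h1
    exact ⟨congrArg Prod.fst h3, congrArg Prod.snd h3, h2⟩
  · rintro ⟨hx, hz, hr⟩
    refine SemidirectProduct.ext ?_ ?_
    · show pH g.left = 1
      show Multiplicative.ofAdd (g.left.x, g.left.z) = 1
      rw [hx, hz]
      rfl
    · show g.right = 1
      exact hr

lemma zz_pow (n : ℕ) : Hei.zz ^ n = ⟨0, (n : ℤ), 0⟩ := by
  induction n with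
  | zero => rfl
  | succ n ih =>
      rw [pow_succ, ih]
      ext <;> simp [Hei.zz] <;> push_cast <;> ring

lemma zz_zpow (n : ℤ) : Hei.zz ^ n = ⟨0, n, 0⟩ := by
  cases n with
  | ofNat k => rw [Int.ofNat_eq_coe, zpow_natCast, zz_pow]
  | negSucc k =>
      rw [zpow_negSucc, zz_pow]
      ext <;> simp [Hei.zz, Int.negSucc_eq] <;> push_cast <;> ring

lemma ker_p_eq : p.ker = Subgroup.zpowers zG := by
  ext g
  rw [mem_ker_p, Subgroup.mem_zpowers_iff]
  constructor
  · rintro ⟨hx, hz, hr⟩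
    refine ⟨g.left.y, ?_⟩
    have h1 : zG ^ (g.left.y) = SemidirectProduct.inl (φ := φG) (Hei.zz ^ (g.left.y)) := by
      rw [map_zpow]
      rfl
    rw [h1, zz_zpow]
    refine SemidirectProduct.ext ?_ ?_
    · show (⟨0, g.left.y, 0⟩ : Hei) = g.left
      ext
      · exact hx.symm
      · rfl
      · exact hz.symm
    · show (1 : Multiplicative (ZMod 4)) = g.right
      exact hr.symm
  · rintro ⟨n, rfl⟩
    have h1 : zG ^ n = SemidirectProduct.inl (φ := φG) (Hei.zz ^ n) := by
      rw [map_zpow]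
      rfl
    rw [h1, zz_zpow]
    exact ⟨rfl, rfl, rfl⟩

/-- The isomorphism `ker p ≅ ℤ` reading off the `y`-coordinate. -/
def yhom : p.ker →* Multiplicative ℤ where
  toFun g := Multiplicative.ofAdd ((g : G)).left.y
  map_one' := rfl
  map_mul' a b := by
    obtain ⟨hax, haz, har⟩ := mem_ker_p.mp a.2
    show Multiplicative.ofAdd (((a : G) * (b : G)).left.y)
      = Multiplicative.ofAdd ((a : G).left.y + (b : G).left.y)
    congr 1
    rw [SemidirectProduct.mul_left, har, map_one φG, MulAut.one_apply]
    simp [hax]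

lemma yhom_inj : Function.Injective yhom := by
  rw [injective_iff_map_eq_one]
  intro a ha
  obtain ⟨hx, hz, hr⟩ := mem_ker_p.mp a.2
  have hy : (a : G).left.y = 0 := congrArg Multiplicative.toAdd ha
  apply Subtype.ext
  refine SemidirectProduct.ext ?_ ?_
  · show (a : G).left = 1
    ext
    · exact hx
    · exact hy
    · exact hz
  · exact hr

end Aux

/-- Let `V` be an infinite virtually cyclic subgroup of `G = Hei ⋊ ℤ/4` whose image `p(V)`
in `Q = ℤ² ⋊ ℤ/4` is finite.  Then the intersection of `V` with the central kernel `⟨z⟩`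
is nontrivial, `V` contains a central infinite cyclic subgroup, and `V` admits a surjective
homomorphism onto `ℤ`. -/
theorem stmt_16 :
    ∀ V : Subgroup G, Infinite V →
      (∃ H : Subgroup V, IsCyclic H ∧ H.index ≠ 0) →
      Finite (V.map p) →
      (V ⊓ Subgroup.zpowers zG ≠ ⊥) ∧
      (∃ C : Subgroup V, C ≤ Subgroup.center V ∧ IsCyclic C ∧ Infinite C) ∧
      (∃ f : V →* Multiplicative ℤ, Function.Surjective f) := by
  intro V hV _hvc hfin
  set q : V →* Q := p.comp V.subtype with hq
  -- the kernel of q has finite index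
  have hrange : q.range = V.map p := by
    rw [hq, MonoidHom.range_comp, Subgroup.range_subtype]
  have hfinr : Finite q.range := by rw [hrange]; exact hfin
  have hidx : q.ker.index ≠ 0 := by
    rw [Subgroup.index_ker]
    haveI := hfinr
    exact (Nat.card_pos (α := q.range)).ne'
  haveI hFI : q.ker.FiniteIndex := ⟨hidx⟩
  -- members of q.ker lie in p.ker
  have hmemker : ∀ c : V, c ∈ q.ker → (c : G) ∈ p.ker := by
    intro c hc
    exact hc
  -- q.ker is contained in the center of V
  have hCcent : q.ker ≤ Subgroup.center V := by
    intro c hc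
    rw [Subgroup.mem_center_iff]
    intro v
    apply Subtype.ext
    show (v : G) * (c : G) = (c : G) * (v : G)
    have h1 : (c : G) ∈ Subgroup.center G := by
      have h2 : (c : G) ∈ Subgroup.zpowers zG := by
        rw [← ker_p_eq]; exact hmemker c hc
      exact Subgroup.zpowers_le.mpr zG_mem_center h2
    exact Subgroup.mem_center_iff.mp h1 (v : G)
  -- q.ker is infinite
  have hKinf : Infinite q.ker := by
    by_contra h
    rw [not_infinite_iff_finite] at h
    have hfq : Finite (V ⧸ q.ker) := by
      refine Nat.finite_of_card_ne_zero ?_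
      rw [← Subgroup.index_eq_card]
      exact hidx
    have : Finite V := Finite.of_equiv _ (Subgroup.groupEquivQuotientProdSubgroup (s := q.ker)).symm
    haveI := hV
    exact not_finite V
  -- a nontrivial element of q.ker
  haveI := hKinf
  obtain ⟨x, hxmem, hx1⟩ := (Subgroup.nontrivial_iff_exists_ne_one q.ker).mp inferInstance
  have hxK : (x : G) ∈ Subgroup.zpowers zG := by
    rw [← ker_p_eq]; exact hmemker x hxmem
  -- the injection ψ : q.ker →* Multiplicative ℤ
  have hjmem : ∀ c : q.ker, (V.subtype.comp q.ker.subtype) c ∈ p.ker := by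
    intro c
    exact hmemker (c : V) c.2
  set j : q.ker →* p.ker := MonoidHom.codRestrict (V.subtype.comp q.ker.subtype) p.ker hjmem with hj
  have hjinj : Function.Injective j := by
    intro a b hab
    have h2 : ((j a : G)) = ((j b : G)) := congrArg Subtype.val hab
    exact Subtype.ext (Subtype.ext h2)
  set ψ : q.ker →* Multiplicative ℤ := yhom.comp j with hψ
  have hψinj : Function.Injective ψ := yhom_inj.comp hjinj
  have hcyc : IsCyclic q.ker := by
    have e := MonoidHom.ofInjective hψinj
    exact isCyclic_of_surjective e.symm e.symm.surjective
  refine ⟨?_, ⟨q.ker, hCcent, hcyc, hKinf⟩, ?_⟩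
  · -- part 1
    intro hbot
    have hmem : (x : G) ∈ V ⊓ Subgroup.zpowers zG := ⟨x.2, hxK⟩
    rw [hbot, Subgroup.mem_bot] at hmem
    exact hx1 (Subtype.ext hmem)
  · -- part 3 : transfer
    set f₀ : V →* Multiplicative ℤ := ψ.transfer with hf₀
    set n : ℕ := q.ker.index with hn
    have hxcen : ∀ (k : ℕ) (g₀ : V), g₀⁻¹ * (x : V) ^ k * g₀ = (x : V) ^ k := by
      intro k g₀
      have hc : (x : V) ∈ Subgroup.center V := hCcent hxmem
      have hk : (x : V) ^ k ∈ Subgroup.center V := Subgroup.pow_mem _ hc k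
      rw [Subgroup.mem_center_iff] at hk
      rw [mul_assoc, ← hk g₀, ← mul_assoc, inv_mul_cancel, one_mul]
    have ht := MonoidHom.transfer_eq_pow ψ (x : V) (fun k g₀ _ => hxcen k g₀)
    -- f₀ x ≠ 1
    set x' : q.ker := ⟨x, hxmem⟩ with hx'
    have hψx : ψ x' ≠ 1 := by
      intro h
      exact hx1 (congrArg Subtype.val (hψinj (h.trans (map_one ψ).symm)))
    have hxn : (⟨(x : V) ^ n, MonoidHom.transfer_eq_pow_aux (x : V) (fun k g₀ _ => hxcen k g₀)⟩
        : q.ker) = x' ^ n := by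
      apply Subtype.ext
      rfl
    have hf₀x : f₀ (x : V) ≠ 1 := by
      rw [hf₀, ht, hxn, map_pow]
      intro h
      have h2 : (n : ℤ) * Multiplicative.toAdd (ψ x') = 0 := by
        have := congrArg Multiplicative.toAdd h
        simpa [toAdd_pow] using this
      rcases mul_eq_zero.mp h2 with h3 | h3
      · exact hidx (by exact_mod_cast h3)
      · exact hψx (by
          have : Multiplicative.ofAdd (Multiplicative.toAdd (ψ x')) = Multiplicative.ofAdd 0 :=
            congrArg Multiplicative.ofAdd h3
          simpa using this)
    -- the range of f₀ is a nontrivial subgroup of ℤ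
    obtain ⟨g₀, hg₀⟩ := IsCyclic.exists_generator (α := f₀.range)
    set d : ℤ := Multiplicative.toAdd (g₀ : Multiplicative ℤ) with hd
    have hdvd : ∀ v : V, d ∣ Multiplicative.toAdd (f₀ v) := by
      intro v
      obtain ⟨k, hk⟩ := Subgroup.mem_zpowers_iff.mp (hg₀ ⟨f₀ v, ⟨v, rfl⟩⟩)
      have hk2 : ((g₀ : Multiplicative ℤ)) ^ k = f₀ v := congrArg Subtype.val hk
      refine ⟨k, ?_⟩
      have := congrArg Multiplicative.toAdd hk2
      simpa [toAdd_zpow, mul_comm] using this.symm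
    have hdne : d ≠ 0 := by
      intro h0
      have hg1 : (g₀ : Multiplicative ℤ) = 1 := by
        have : Multiplicative.ofAdd d = Multiplicative.ofAdd 0 := congrArg Multiplicative.ofAdd h0
        simpa [hd] using this
      obtain ⟨k, hk⟩ := Subgroup.mem_zpowers_iff.mp (hg₀ ⟨f₀ (x : V), ⟨(x : V), rfl⟩⟩)
      have hk2 : ((g₀ : Multiplicative ℤ)) ^ k = f₀ (x : V) := congrArg Subtype.val hk
      rw [hg1, one_zpow] at hk2
      exact hf₀x hk2.symm
    refine ⟨{ toFun := fun v => Multiplicative.ofAdd (Multiplicative.toAdd (f₀ v) / d)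
              map_one' := by simp
              map_mul' := ?_ }, ?_⟩
    · intro a b
      show Multiplicative.ofAdd (Multiplicative.toAdd (f₀ (a * b)) / d)
        = Multiplicative.ofAdd (Multiplicative.toAdd (f₀ a) / d)
          * Multiplicative.ofAdd (Multiplicative.toAdd (f₀ b) / d)
      rw [← ofAdd_add]
      congr 1
      rw [map_mul, toAdd_mul, Int.add_ediv_of_dvd_left (hdvd a)]
    · intro w
      have hmem : ((g₀ : Multiplicative ℤ)) ^ (Multiplicative.toAdd w) ∈ f₀.range := by
        have := Subgroup.zpow_mem f₀.range g₀.2 (Multiplicative.toAdd w)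
        simpa using this
      obtain ⟨v, hv⟩ := MonoidHom.mem_range.mp hmem
      refine ⟨v, ?_⟩
      show Multiplicative.ofAdd (Multiplicative.toAdd (f₀ v) / d) = w
      rw [hv]
      have : Multiplicative.toAdd ((g₀ : Multiplicative ℤ) ^ (Multiplicative.toAdd w))
          = Multiplicative.toAdd w * d := by
        simp [toAdd_zpow, hd, mul_comm]
      rw [this, Int.mul_ediv_cancel _ hdne]
      rfl
end
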